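/- arXiv:1611.08748 — 3 statements merged into one kernel-verified Lean document; each statement's English description precedes it below -/
import Mathlib

section
/- Assume (a,b) ⊆ [0,1] is an open interval on which m'(x) ≠ 0 for every x ∈ (a,b). Then w(s,·) → 0 locally uniformly in (a,b) as s → ∞; that is, for every compact set K ⊂ (a,b), sup_{x ∈ K} w(s,x) → 0 as s → ∞. -/
open MeasureTheory Filter Set

/-- The Neumann principal eigenvalue of `-φ'' - 2 s m' φ' + c φ = λ φ` on `(0,1)`,
via its variational characterization. -/
noncomputable def lambdaN (m c : ℝ → ℝ) (s : ℝ) : ℝ :=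
  sInf {l : ℝ | ∃ φ : ℝ → ℝ, ContDiff ℝ 1 φ ∧
    (∫ x in (0:ℝ)..1, Real.exp (2 * s * m x) * (φ x) ^ 2) = 1 ∧
    l = ∫ x in (0:ℝ)..1, Real.exp (2 * s * m x) * ((deriv φ x) ^ 2 + c x * (φ x) ^ 2)}

/-- `v` is a positive, `L²`-normalized principal eigenfunction (in the transformed
variable `w = e^{s m} φ`) associated with the eigenvalue `lam` and parameter `s`. -/
def IsPrincipalEigenfunction (m c : ℝ → ℝ) (lam s : ℝ) (v : ℝ → ℝ) : Prop :=
  ContDiff ℝ 2 v ∧ (∀ x ∈ Set.Icc (0:ℝ) 1, 0 < v x) ∧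
  (∀ x ∈ Set.Ioo (0:ℝ) 1,
    -(deriv (deriv v) x) + (s ^ 2 * (deriv m x) ^ 2 + s * deriv (deriv m) x + c x) * v x
      = lam * v x) ∧
  deriv v 0 = s * v 0 * deriv m 0 ∧ deriv v 1 = s * v 1 * deriv m 1 ∧
  (∫ x in (0:ℝ)..1, (v x) ^ 2) = 1

lemma contDiff_one_deriv {f : ℝ → ℝ} (hf : ContDiff ℝ 2 f) : ContDiff ℝ 1 (deriv f) := by
  have h2 : ContDiff ℝ ((1 : ℕ) + 1) f := by exact_mod_cast hf
  exact (contDiff_succ_iff_deriv.mp h2).2.2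

lemma lemA (f : ℝ → ℝ) (hf : ContDiff ℝ 2 f) (p q e : ℝ) (he : 0 ≤ e)
    (hpos : ∀ x ∈ Icc p q, 0 < f x)
    (hd0 : 0 ≤ deriv f p)
    (hode : ∀ x ∈ Icc p q, e * f x ≤ deriv (deriv f) x) :
    ∀ x ∈ Icc p q, f p * (1 + e * (x - p)^2 / 2) ≤ f x := by
  have hf1 : ContDiff ℝ 1 (deriv f) := contDiff_one_deriv hf
  have hdf : Differentiable ℝ f := hf.differentiable (by norm_num)
  have hdf1 : Differentiable ℝ (deriv f) := hf1.differentiable one_ne_zero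
  have mono1 : MonotoneOn (deriv f) (Icc p q) := by
    apply monotoneOn_of_deriv_nonneg (convex_Icc p q) hf1.continuous.continuousOn
      hdf1.differentiableOn
    intro x hx
    rw [interior_Icc] at hx
    have h1 := hode x (Ioo_subset_Icc_self hx)
    have h2 := hpos x (Ioo_subset_Icc_self hx)
    nlinarith
  have hd1 : ∀ x ∈ Icc p q, 0 ≤ deriv f x := fun x hx =>
    hd0.trans (mono1 ⟨le_rfl, hx.1.trans hx.2⟩ hx hx.1)
  have mono2 : MonotoneOn f (Icc p q) := by
    apply monotoneOn_of_deriv_nonneg (convex_Icc p q) hdf.continuous.continuousOn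
      hdf.differentiableOn
    intro x hx
    rw [interior_Icc] at hx
    exact hd1 x (Ioo_subset_Icc_self hx)
  have hfp : ∀ x ∈ Icc p q, f p ≤ f x := fun x hx =>
    mono2 ⟨le_rfl, hx.1.trans hx.2⟩ hx hx.1
  set G := fun x => deriv f x - f p * e * (x - p) with hG
  have hGd : ∀ x, HasDerivAt G (deriv (deriv f) x - f p * e) x := by
    intro x
    have h1 : HasDerivAt (deriv f) (deriv (deriv f) x) x := (hdf1 x).hasDerivAt
    have h2 : HasDerivAt (fun x => f p * e * (x - p)) (f p * e) x := by
      simpa using ((hasDerivAt_id x).sub_const p).const_mul (f p * e)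
    simpa using h1.fun_sub h2
  have monoG : MonotoneOn G (Icc p q) := by
    apply monotoneOn_of_deriv_nonneg (convex_Icc p q)
      (fun x _ => (hGd x).continuousAt.continuousWithinAt)
      (fun x _ => (hGd x).differentiableAt.differentiableWithinAt)
    intro x hx
    rw [interior_Icc] at hx
    rw [(hGd x).deriv]
    have h3 := hode x (Ioo_subset_Icc_self hx)
    have h4 := hfp x (Ioo_subset_Icc_self hx)
    nlinarith
  have hGge : ∀ x ∈ Icc p q, f p * e * (x - p) ≤ deriv f x := by
    intro x hx
    have h5 := monoG ⟨le_rfl, hx.1.trans hx.2⟩ hx hx.1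
    simp only [hG] at h5
    nlinarith
  set F := fun x => f x - f p * e * ((x - p)^2 / 2) with hF
  have hFd : ∀ x, HasDerivAt F (deriv f x - f p * e * (x - p)) x := by
    intro x
    have h1 : HasDerivAt f (deriv f x) x := (hdf x).hasDerivAt
    have h2 : HasDerivAt (fun x => (x - p)^2) (2 * (x - p)) x := by
      simpa using ((hasDerivAt_id x).sub_const p).fun_pow 2
    have h3 := (h2.div_const 2).const_mul (f p * e)
    have h4 := h1.fun_sub h3
    refine h4.congr_deriv ?_
    ring
  have monoF : MonotoneOn F (Icc p q) := by
    apply monotoneOn_of_deriv_nonneg (convex_Icc p q)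
      (fun x _ => (hFd x).continuousAt.continuousWithinAt)
      (fun x _ => (hFd x).differentiableAt.differentiableWithinAt)
    intro x hx
    rw [interior_Icc] at hx
    rw [(hFd x).deriv]
    have h6 := hGge x (Ioo_subset_Icc_self hx)
    linarith
  intro x hx
  have h7 := monoF ⟨le_rfl, hx.1.trans hx.2⟩ hx hx.1
  simp only [hF] at h7
  nlinarith

lemma pointBound (v : ℝ → ℝ) (hv : ContDiff ℝ 2 v) (x₀ d e : ℝ) (hd : 0 < d) (he : 0 ≤ e)
    (hv2 : (∫ x in (0:ℝ)..1, (v x)^2) = 1)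
    (hpos : ∀ x ∈ Icc (0:ℝ) 1, 0 < v x)
    (hsub : Icc (x₀ - d) (x₀ + d) ⊆ Icc (0:ℝ) 1)
    (hode : ∀ x ∈ Icc (x₀ - d) (x₀ + d), e * v x ≤ deriv (deriv v) x) :
    (v x₀)^2 * (e * d^2/8)^2 * (d/2) ≤ 1 := by
  have hvc : Continuous v := hv.continuous
  have hx0m : x₀ - d ∈ Icc (0:ℝ) 1 := hsub ⟨le_rfl, by linarith⟩
  have hx0p : x₀ + d ∈ Icc (0:ℝ) 1 := hsub ⟨by linarith, le_rfl⟩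
  have hx0 : x₀ ∈ Icc (0:ℝ) 1 := hsub ⟨by linarith, by linarith⟩
  have hvx0 : 0 < v x₀ := hpos x₀ hx0
  -- find a subinterval [r, r+d/2] ⊆ [0,1] where v ≥ v x₀ * (e d²/8)
  have key : ∃ r, 0 ≤ r ∧ r + d/2 ≤ 1 ∧ ∀ y ∈ Icc r (r + d/2), v x₀ * (e * d^2/8) ≤ v y := by
    rcases le_or_gt 0 (deriv v x₀) with hge | hlt
    · refine ⟨x₀ + d/2, by linarith [hx0.1], by linarith [hx0p.2], ?_⟩
      intro y hy
      have hbd := lemA v hv x₀ (x₀ + d) e he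
        (fun x hx => hpos x (hsub ⟨by linarith [hx.1], hx.2⟩)) hge
        (fun x hx => hode x ⟨by linarith [hx.1], hx.2⟩)
        y ⟨by linarith [hy.1], by linarith [hy.2]⟩
      have h1 : d/2 ≤ y - x₀ := by linarith [hy.1]
      have hsq : (d/2)*(d/2) ≤ (y - x₀)*(y - x₀) := mul_self_le_mul_self (by linarith) h1
      have h2 : e * d^2/8 ≤ 1 + e * (y - x₀)^2 / 2 := by
        nlinarith [mul_le_mul_of_nonneg_left hsq he]
      nlinarith
    · set g := fun x => v (2*x₀ - x) with hg
      have hgc : ContDiff ℝ 2 g := hv.comp (contDiff_const.sub contDiff_id)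
      have hgd : deriv g = fun x => -deriv v (2*x₀ - x) :=
        funext fun x => deriv_comp_const_sub v (2*x₀) x
      have hgd2 : ∀ x, deriv (deriv g) x = deriv (deriv v) (2*x₀ - x) := by
        intro x
        rw [hgd]
        have : (fun x => -deriv v (2*x₀ - x)) = fun x => -(fun y => deriv v (2*x₀ - y)) x := rfl
        rw [this, deriv.fun_neg, deriv_comp_const_sub]
        ring
      have hgx0 : g x₀ = v x₀ := by simp [hg, two_mul]
      have hbd := lemA g hgc x₀ (x₀ + d) e he
        (fun x hx => hpos _ (hsub ⟨by linarith [hx.2], by linarith [hx.1]⟩))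
        (by rw [hgd]; simp only; rw [show 2*x₀ - x₀ = x₀ by ring]; linarith)
        (by
          intro x hx
          rw [hgd2]
          exact hode (2*x₀ - x) ⟨by linarith [hx.2], by linarith [hx.1]⟩)
      refine ⟨x₀ - d, by linarith [hx0m.1], by linarith [hx0.2], ?_⟩
      intro y hy
      have hyb : 2*x₀ - y ∈ Icc x₀ (x₀ + d) := ⟨by linarith [hy.2], by linarith [hy.1]⟩
      have hbd2 := hbd (2*x₀ - y) hyb
      rw [hgx0] at hbd2
      have hval : g (2*x₀ - y) = v y := by simp [hg]
      rw [hval] at hbd2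
      have h1 : d/2 ≤ (2*x₀ - y) - x₀ := by linarith [hy.2]
      have hsq : (d/2)*(d/2) ≤ ((2*x₀ - y) - x₀)*((2*x₀ - y) - x₀) := mul_self_le_mul_self (by linarith) h1
      have h2 : e * d^2/8 ≤ 1 + e * ((2*x₀ - y) - x₀)^2 / 2 := by
        nlinarith [mul_le_mul_of_nonneg_left hsq he]
      nlinarith
  obtain ⟨r, hr0, hr1, hrv⟩ := key
  have hc0 : 0 ≤ v x₀ * (e * d^2/8) := by positivity
  have h1 : (∫ _ in r..(r + d/2), (v x₀ * (e * d^2/8))^2) ≤ ∫ y in r..(r + d/2), (v y)^2 := by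
    apply intervalIntegral.integral_mono_on (by linarith)
      intervalIntegrable_const ((hvc.pow 2).intervalIntegrable _ _)
    intro y hy
    exact pow_le_pow_left₀ hc0 (hrv y hy) 2
  have h2 : (∫ y in r..(r + d/2), (v y)^2) ≤ ∫ y in (0:ℝ)..1, (v y)^2 := by
    apply intervalIntegral.integral_mono_interval hr0 (by linarith) hr1
      (ae_of_all _ fun y => sq_nonneg (v y)) ((hvc.pow 2).intervalIntegrable _ _)
  rw [intervalIntegral.integral_const, hv2] at *
  have : (r + d/2 - r) • (v x₀ * (e * d^2/8))^2 ≤ 1 := le_trans h1 h2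
  rw [smul_eq_mul] at this
  nlinarith

lemma lambdaN_le_max (m c : ℝ → ℝ) (hmc : Continuous m) (hc : Continuous c)
    (s Cmin Cmax : ℝ)
    (hmin : ∀ x ∈ Icc (0:ℝ) 1, Cmin ≤ c x) (hmax : ∀ x ∈ Icc (0:ℝ) 1, c x ≤ Cmax) :
    lambdaN m c s ≤ Cmax := by
  have hcont : Continuous fun x => Real.exp (2*s*m x) :=
    Real.continuous_exp.comp (continuous_const.mul hmc)
  set I := ∫ x in (0:ℝ)..1, Real.exp (2*s*m x) with hI
  have hIpos : 0 < I :=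
    intervalIntegral.intervalIntegral_pos_of_pos (hcont.intervalIntegrable 0 1) (fun x => Real.exp_pos _) one_pos
  set t := Real.sqrt I⁻¹ with ht
  have ht2 : t^2 = I⁻¹ := Real.sq_sqrt (by positivity)
  have hbdd : BddBelow {l : ℝ | ∃ φ : ℝ → ℝ, ContDiff ℝ 1 φ ∧
      (∫ x in (0:ℝ)..1, Real.exp (2 * s * m x) * (φ x) ^ 2) = 1 ∧
      l = ∫ x in (0:ℝ)..1, Real.exp (2 * s * m x) * ((deriv φ x) ^ 2 + c x * (φ x) ^ 2)} := by
    refine ⟨Cmin, ?_⟩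
    rintro l ⟨φ, hφ, hφn, rfl⟩
    have hφc : Continuous φ := hφ.continuous
    have hφd : Continuous (deriv φ) := hφ.continuous_deriv le_rfl
    have heq : Cmin = ∫ x in (0:ℝ)..1, Cmin * (Real.exp (2*s*m x) * (φ x)^2) := by
      rw [intervalIntegral.integral_const_mul, hφn, mul_one]
    rw [heq]
    apply intervalIntegral.integral_mono_on zero_le_one
      ((continuous_const.mul (hcont.mul (hφc.pow 2))).intervalIntegrable _ _)
      ((hcont.mul ((hφd.pow 2).add (hc.mul (hφc.pow 2)))).intervalIntegrable _ _)
    intro x hx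
    have h1 := hmin x hx
    have h2 : (0:ℝ) < Real.exp (2*s*m x) := Real.exp_pos _
    have h3 : Cmin * (φ x)^2 ≤ (deriv φ x)^2 + c x * (φ x)^2 := by
      nlinarith [sq_nonneg (deriv φ x), sq_nonneg (φ x)]
    calc Cmin * (Real.exp (2*s*m x) * (φ x)^2)
        = Real.exp (2*s*m x) * (Cmin * (φ x)^2) := by ring
      _ ≤ Real.exp (2*s*m x) * ((deriv φ x)^2 + c x * (φ x)^2) :=
          mul_le_mul_of_nonneg_left h3 h2.le
  have hnorm : (∫ x in (0:ℝ)..1, Real.exp (2*s*m x) * ((fun _ : ℝ => t) x)^2) = 1 := by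
    simp only
    rw [intervalIntegral.integral_mul_const, ht2, ← hI, mul_inv_cancel₀ hIpos.ne']
  have hmem : (∫ x in (0:ℝ)..1,
      Real.exp (2*s*m x) * ((deriv (fun _ : ℝ => t) x)^2 + c x * ((fun _ : ℝ => t) x)^2))
      ∈ {l : ℝ | ∃ φ : ℝ → ℝ, ContDiff ℝ 1 φ ∧
      (∫ x in (0:ℝ)..1, Real.exp (2 * s * m x) * (φ x) ^ 2) = 1 ∧
      l = ∫ x in (0:ℝ)..1, Real.exp (2 * s * m x) * ((deriv φ x) ^ 2 + c x * (φ x) ^ 2)} :=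
    ⟨fun _ => t, contDiff_const, hnorm, rfl⟩
  have hle := csInf_le hbdd hmem
  refine hle.trans ?_
  have hder : (deriv (fun _ : ℝ => t)) = fun _ => (0:ℝ) := by
    funext x; exact deriv_const x t
  have hval : (∫ x in (0:ℝ)..1,
      Real.exp (2*s*m x) * ((deriv (fun _ : ℝ => t) x)^2 + c x * ((fun _ : ℝ => t) x)^2))
      = ∫ x in (0:ℝ)..1, Real.exp (2*s*m x) * (c x * t^2) := by
    rw [hder]; norm_num
  rw [hval]
  have hbound : (∫ x in (0:ℝ)..1, Real.exp (2*s*m x) * (c x * t^2))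
      ≤ ∫ x in (0:ℝ)..1, Cmax * (Real.exp (2*s*m x) * t^2) := by
    apply intervalIntegral.integral_mono_on zero_le_one
      ((hcont.mul (hc.mul continuous_const)).intervalIntegrable _ _)
      ((continuous_const.mul (hcont.mul continuous_const)).intervalIntegrable _ _)
    intro x hx
    have h2 : (0:ℝ) < Real.exp (2*s*m x) := Real.exp_pos _
    have h3 : c x * t^2 ≤ Cmax * t^2 :=
      mul_le_mul_of_nonneg_right (hmax x hx) (sq_nonneg t)
    calc Real.exp (2*s*m x) * (c x * t^2) ≤ Real.exp (2*s*m x) * (Cmax * t^2) :=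
          mul_le_mul_of_nonneg_left h3 h2.le
      _ = Cmax * (Real.exp (2*s*m x) * t^2) := by ring
  refine hbound.trans ?_
  rw [intervalIntegral.integral_const_mul, intervalIntegral.integral_mul_const, ht2, ← hI,
    mul_inv_cancel₀ hIpos.ne', mul_one]

/-- Lemma 2.3 (i): if `m' ≠ 0` on an open interval `(a,b) ⊆ [0,1]`, then the
principal eigenfunctions `w(s,·)` tend to `0` locally uniformly in `(a,b)` as `s → ∞`. -/
theorem eigenfunction_tendsto_zero_locally_uniformly_of_deriv_ne_zero
    (m c : ℝ → ℝ) (hm : ContDiff ℝ 2 m) (hc : Continuous c)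
    (w : ℝ → ℝ → ℝ)
    (hw : ∀ s > (0:ℝ), IsPrincipalEigenfunction m c (lambdaN m c s) s (w s))
    (a b : ℝ) (hab : Set.Ioo a b ⊆ Set.Icc (0:ℝ) 1)
    (hm' : ∀ x ∈ Set.Ioo a b, deriv m x ≠ 0) :
    ∀ K : Set ℝ, IsCompact K → K ⊆ Set.Ioo a b →
      TendstoUniformlyOn (fun s x => w s x) (fun _ => (0:ℝ)) Filter.atTop K := by
  intro K hK hKsub
  rcases K.eq_empty_or_nonempty with rfl | hne
  · exact tendstoUniformlyOn_empty
  -- basic facts about a, b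
  obtain ⟨y, hyK⟩ := id hne
  have hy : y ∈ Ioo a b := hKsub hyK
  have hy01 : y ∈ Icc (0:ℝ) 1 := hab hy
  have ha0 : 0 ≤ a := by
    by_contra h
    push_neg at h
    have hmem : a/2 ∈ Ioo a b := ⟨by linarith, by linarith [hy.2, hy01.1]⟩
    linarith [(hab hmem).1]
  have hb1 : b ≤ 1 := by
    by_contra h
    push_neg at h
    have hmem : (b+1)/2 ∈ Ioo a b := ⟨by linarith [hy.1, hy01.2], by linarith⟩
    linarith [(hab hmem).2]
  -- the compact frame [p, q]
  set α := sInf K with hα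
  set β := sSup K with hβ
  have hαK : α ∈ K := hK.sInf_mem hne
  have hβK : β ∈ K := hK.sSup_mem hne
  have hαab : α ∈ Ioo a b := hKsub hαK
  have hβab : β ∈ Ioo a b := hKsub hβK
  have hαβ : α ≤ β := csInf_le_csSup hne hK.bddBelow hK.bddAbove
  set p := (a + α)/2 with hp
  set q := (β + b)/2 with hq
  have hap : a < p := by simp only [hp]; linarith [hαab.1]
  have hpα : p < α := by simp only [hp]; linarith [hαab.1]
  have hβq : β < q := by simp only [hq]; linarith [hβab.2]
  have hqb : q < b := by simp only [hq]; linarith [hβab.2]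
  set d := min (α - p) (q - β) with hd
  have hdpos : 0 < d := lt_min (by linarith) (by linarith)
  have hJab : Icc p q ⊆ Ioo a b := fun x hx => ⟨lt_of_lt_of_le hap hx.1, lt_of_le_of_lt hx.2 hqb⟩
  have hJ01 : Icc p q ⊆ Icc (0:ℝ) 1 := fun x hx => hab (hJab hx)
  have hJoo : Icc p q ⊆ Ioo (0:ℝ) 1 := fun x hx =>
    ⟨lt_of_le_of_lt ha0 (hJab hx).1, lt_of_lt_of_le (hJab hx).2 hb1⟩
  have hframe : ∀ x₀ ∈ K, Icc (x₀ - d) (x₀ + d) ⊆ Icc p q := by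
    intro x₀ hx₀ z hz
    have h1 : α ≤ x₀ := csInf_le hK.bddBelow hx₀
    have h2 : x₀ ≤ β := le_csSup hK.bddAbove hx₀
    constructor
    · have := min_le_left (α - p) (q - β)
      simp only [hd] at hz
      linarith [hz.1]
    · have := min_le_right (α - p) (q - β)
      linarith [hz.2]
  -- continuity of derivatives of m
  have hm1 : ContDiff ℝ 1 (deriv m) := contDiff_one_deriv hm
  have hm1c : Continuous (deriv m) := hm1.continuous
  have hm2c : Continuous (deriv (deriv m)) := hm1.continuous_deriv le_rfl
  -- δ² := min of (m')² on [p,q]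
  have hpq : p ≤ q := by linarith
  obtain ⟨z, hzJ, hz⟩ := isCompact_Icc.exists_isMinOn (nonempty_Icc.mpr hpq)
    ((hm1c.pow 2).continuousOn)
  set δ2 := (deriv m z)^2 with hδ2
  have hδ2pos : 0 < δ2 := by
    have := hm' z (hJab hzJ)
    positivity
  have hδ2min : ∀ x ∈ Icc p q, δ2 ≤ (deriv m x)^2 := fun x hx => hz hx
  -- Cm2 := max of |m''| on [p,q]
  obtain ⟨z2, hz2J, hz2⟩ := isCompact_Icc.exists_isMaxOn (nonempty_Icc.mpr hpq)
    ((hm2c.abs).continuousOn)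
  set Cm2 := |deriv (deriv m) z2| with hCm2
  have hCm2nn : 0 ≤ Cm2 := abs_nonneg _
  have hCm2max : ∀ x ∈ Icc p q, |deriv (deriv m) x| ≤ Cm2 := fun x hx => hz2 hx
  -- Cmin, Cmax of c on [0,1]
  obtain ⟨z3, hz3J, hz3⟩ := isCompact_Icc.exists_isMinOn (nonempty_Icc.mpr zero_le_one)
    hc.continuousOn
  obtain ⟨z4, hz4J, hz4⟩ := isCompact_Icc.exists_isMaxOn (nonempty_Icc.mpr zero_le_one)
    hc.continuousOn
  set Cmin := c z3 with hCmin
  set Cmax := c z4 with hCmax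
  have hcmin : ∀ x ∈ Icc (0:ℝ) 1, Cmin ≤ c x := fun x hx => hz3 hx
  have hcmax : ∀ x ∈ Icc (0:ℝ) 1, c x ≤ Cmax := fun x hx => hz4 hx
  have hCmm : Cmin ≤ Cmax := (hcmin y hy01).trans (hcmax y hy01)
  have hlam : ∀ s : ℝ, lambdaN m c s ≤ Cmax := fun s =>
    lambdaN_le_max m c hm.continuous hc s Cmin Cmax hcmin hcmax
  -- thresholds
  set B := Cm2 + (Cmax - Cmin) with hB
  have hBnn : 0 ≤ B := by simp only [hB]; linarith
  set S₀ := max 1 (2*B/δ2) with hS₀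
  set A := (δ2 * d^2/16)^2 * (d/2) with hA
  have hApos : 0 < A := by positivity
  set Csup := 1 / Real.sqrt A with hCsup
  have hCsupnn : 0 ≤ Csup := by positivity
  -- the per-point bound
  have main : ∀ s, S₀ ≤ s → ∀ x₀ ∈ K, w s x₀ ≤ Csup / s^2 := by
    intro s hs x₀ hx₀
    have hs1 : (1:ℝ) ≤ s := le_trans (le_max_left _ _) hs
    have hsB : 2*B/δ2 ≤ s := le_trans (le_max_right _ _) hs
    have hspos : (0:ℝ) < s := by linarith
    obtain ⟨hwC2, hwpos, hwode, _, _, hwnorm⟩ := hw s hspos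
    set e := s^2 * δ2 / 2 with he
    have hepos : 0 < e := by positivity
    have hsubJ := hframe x₀ hx₀
    have hsub01 : Icc (x₀ - d) (x₀ + d) ⊆ Icc (0:ℝ) 1 := fun z hz => hJ01 (hsubJ hz)
    have hode : ∀ x ∈ Icc (x₀ - d) (x₀ + d), e * w s x ≤ deriv (deriv (w s)) x := by
      intro x hx
      have hxJ := hsubJ hx
      have hx01 := hJoo hxJ
      have heq := hwode x hx01
      have hwx : 0 < w s x := hwpos x (Ioo_subset_Icc_self hx01)
      have hQ : e ≤ s^2 * (deriv m x)^2 + s * deriv (deriv m) x + c x - lambdaN m c s := by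
        have h1 := hδ2min x hxJ
        have h2 := abs_le.mp (hCm2max x hxJ)
        have h3 := hcmin x (Ioo_subset_Icc_self hx01)
        have e4 := hlam s
        have e1 : s^2*δ2 ≤ s^2*(deriv m x)^2 := mul_le_mul_of_nonneg_left h1 (sq_nonneg s)
        have e2 : s*(-Cm2) ≤ s*(deriv (deriv m) x) := mul_le_mul_of_nonneg_left h2.1 hspos.le
        have hsδ : 2*B ≤ s * δ2 := by
          rw [div_le_iff₀ hδ2pos] at hsB; linarith
        have step1 : s*(2*B) ≤ s*(s*δ2) := mul_le_mul_of_nonneg_left hsδ hspos.le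
        have step2 : Cmax - Cmin ≤ s*(Cmax - Cmin) := le_mul_of_one_le_left (by linarith) hs1
        simp only [he, hB] at *
        nlinarith [step1, step2, e1, e2]
      have hD : deriv (deriv (w s)) x
          = (s^2*(deriv m x)^2 + s*deriv (deriv m) x + c x) * w s x
            - lambdaN m c s * w s x := by linarith
      calc e * w s x ≤ (s^2 * (deriv m x)^2 + s * deriv (deriv m) x + c x - lambdaN m c s) * w s x :=
            mul_le_mul_of_nonneg_right hQ hwx.le
        _ = (s^2*(deriv m x)^2 + s*deriv (deriv m) x + c x) * w s x - lambdaN m c s * w s x := by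
            ring
        _ = deriv (deriv (w s)) x := hD.symm
    have hpb := pointBound (w s) hwC2 x₀ d e hdpos hepos.le hwnorm hwpos hsub01 hode
    -- from hpb deduce w s x₀ ≤ Csup / s^2
    have hwx0 : 0 < w s x₀ := hwpos x₀ (hsub01 ⟨by linarith, by linarith⟩)
    have hpb2 : (w s x₀)^2 * (A * s^4) ≤ 1 := by
      calc (w s x₀)^2 * (A * s^4) = (w s x₀)^2 * (e * d^2/8)^2 * (d/2) := by
            simp only [he, hA]; ring
        _ ≤ 1 := hpb
    have hsq : (w s x₀)^2 ≤ (Csup / s^2)^2 := by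
      have hCsup2 : Csup^2 = 1 / A := by
        rw [hCsup, div_pow, one_pow, Real.sq_sqrt hApos.le]
      rw [div_pow, hCsup2]
      rw [div_div]
      rw [le_div_iff₀ (mul_pos hApos (pow_pos (pow_pos hspos 2) 2))]
      calc (w s x₀)^2 * (A * (s^2)^2) = (w s x₀)^2 * (A * s^4) := by ring
        _ ≤ 1 := hpb2
    calc w s x₀ = Real.sqrt ((w s x₀)^2) := (Real.sqrt_sq hwx0.le).symm
      _ ≤ Real.sqrt ((Csup / s^2)^2) := Real.sqrt_le_sqrt hsq
      _ = Csup / s^2 := Real.sqrt_sq (div_nonneg hCsupnn (sq_nonneg s))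
  -- conclude uniform convergence
  rw [Metric.tendstoUniformlyOn_iff]
  intro ε hε
  have htend : Tendsto (fun s : ℝ => Csup / s^2) atTop (nhds 0) :=
    tendsto_const_nhds.div_atTop (tendsto_pow_atTop two_ne_zero)
  filter_upwards [htend.eventually_lt_const hε, eventually_ge_atTop S₀] with s hs1 hs2
  intro x hxK
  have hx01 : x ∈ Icc (0:ℝ) 1 := hab (hKsub hxK)
  have hwx : 0 < w s x := by
    have hspos : (0:ℝ) < s := lt_of_lt_of_le one_pos (le_trans (le_max_left _ _) hs2)
    exact (hw s hspos).2.1 x hx01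
  have hb := main s hs2 x hxK
  rw [Real.dist_eq]
  rw [abs_sub_comm, sub_zero, abs_of_pos hwx]
  exact lt_of_le_of_lt hb hs1
end

section
/- Assume 0 < a ≤ 1 and m'(x) > 0 for every x ∈ [0,a). Then w(s,·) → 0 locally uniformly in [0,a) as s → ∞; that is, for every compact set K ⊂ [0,a), sup_{x ∈ K} w(s,x) → 0 as s → ∞. -/
open MeasureTheory Filter Set

lemma deriv_contDiff_of_two' {v : ℝ → ℝ} (hv : ContDiff ℝ 2 v) : ContDiff ℝ 1 (deriv v) := by
  have h : ContDiff ℝ ((1:ℕ) + 1) v := by exact_mod_cast hv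
  exact (contDiff_succ_iff_deriv.mp h).2.2

lemma lambdaN_le {m c : ℝ → ℝ} (hm : Continuous m) (hc : Continuous c) {Cc : ℝ}
    (hCc : ∀ x ∈ Icc (0:ℝ) 1, |c x| ≤ Cc) (s : ℝ) : lambdaN m c s ≤ Cc := by
  set E : ℝ → ℝ := fun x => Real.exp (2 * s * m x) with hE
  have hEc : Continuous E := (Real.continuous_exp.comp (by fun_prop))
  have hEpos : ∀ x, 0 < E x := fun x => Real.exp_pos _
  have hI : (0:ℝ) < ∫ x in (0:ℝ)..1, E x :=
    intervalIntegral.intervalIntegral_pos_of_pos_on (hEc.intervalIntegrable 0 1)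
      (fun x _ => hEpos x) one_pos
  set I : ℝ := ∫ x in (0:ℝ)..1, E x with hIdef
  set t : ℝ := Real.sqrt I⁻¹ with ht
  have ht2 : t ^ 2 = I⁻¹ := Real.sq_sqrt (by positivity)
  have hmem : (t^2 * ∫ x in (0:ℝ)..1, E x * c x) ∈ {l : ℝ | ∃ φ : ℝ → ℝ, ContDiff ℝ 1 φ ∧
      (∫ x in (0:ℝ)..1, Real.exp (2 * s * m x) * (φ x) ^ 2) = 1 ∧
      l = ∫ x in (0:ℝ)..1, Real.exp (2 * s * m x) * ((deriv φ x) ^ 2 + c x * (φ x) ^ 2)} := by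
    refine ⟨fun _ => t, contDiff_const, ?_, ?_⟩
    · have : (∫ x in (0:ℝ)..1, Real.exp (2 * s * m x) * ((fun _ : ℝ => t) x) ^ 2)
          = t^2 * I := by
        rw [hIdef, ← intervalIntegral.integral_const_mul]
        congr 1; ext x; ring
      rw [this, ht2, inv_mul_cancel₀ (ne_of_gt hI)]
    · rw [← intervalIntegral.integral_const_mul]
      congr 1; ext x
      simp [deriv_const]
      ring
  have hbdd : BddBelow {l : ℝ | ∃ φ : ℝ → ℝ, ContDiff ℝ 1 φ ∧
      (∫ x in (0:ℝ)..1, Real.exp (2 * s * m x) * (φ x) ^ 2) = 1 ∧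
      l = ∫ x in (0:ℝ)..1, Real.exp (2 * s * m x) * ((deriv φ x) ^ 2 + c x * (φ x) ^ 2)} := by
    refine ⟨-Cc, ?_⟩
    rintro l ⟨φ, hφ, hnorm, rfl⟩
    have hφc : Continuous φ := hφ.continuous
    have hφ'c : Continuous (deriv φ) := hφ.continuous_deriv le_rfl
    have h1 : ∫ x in (0:ℝ)..1, (-Cc) * (E x * (φ x)^2)
        ≤ ∫ x in (0:ℝ)..1, E x * ((deriv φ x) ^ 2 + c x * (φ x) ^ 2) := by
      apply intervalIntegral.integral_mono_on zero_le_one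
      · exact (continuous_const.mul (hEc.mul (hφc.pow 2))).intervalIntegrable 0 1
      · exact (hEc.mul ((hφ'c.pow 2).add (hc.mul (hφc.pow 2)))).intervalIntegrable 0 1
      · intro x hx
        have h2 : -Cc ≤ c x := neg_le_of_abs_le (hCc x hx)
        nlinarith [sq_nonneg (deriv φ x), sq_nonneg (φ x), (hEpos x).le,
          mul_le_mul_of_nonneg_left h2 (mul_nonneg (hEpos x).le (sq_nonneg (φ x)))]
    have h3 : ∫ x in (0:ℝ)..1, (-Cc) * (E x * (φ x)^2) = -Cc := by
      rw [intervalIntegral.integral_const_mul]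
      rw [show (∫ x in (0:ℝ)..1, E x * (φ x)^2) = 1 from hnorm]
      ring
    rw [h3] at h1; exact h1
  refine le_trans (csInf_le hbdd hmem) ?_
  -- t^2 * ∫ E c ≤ Cc
  have h4 : (∫ x in (0:ℝ)..1, E x * c x) ≤ ∫ x in (0:ℝ)..1, E x * Cc := by
    apply intervalIntegral.integral_mono_on zero_le_one
    · exact (hEc.mul hc).intervalIntegrable 0 1
    · exact (hEc.mul continuous_const).intervalIntegrable 0 1
    · intro x hx
      exact mul_le_mul_of_nonneg_left (le_of_abs_le (hCc x hx)) (hEpos x).le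
  have h5 : (∫ x in (0:ℝ)..1, E x * Cc) = I * Cc := by
    rw [hIdef, ← intervalIntegral.integral_mul_const]
  have hCc0 : 0 ≤ Cc := le_trans (abs_nonneg _) (hCc 0 (by norm_num))
  calc t^2 * ∫ x in (0:ℝ)..1, E x * c x ≤ t^2 * (I * Cc) := by
        rw [ht2]
        exact mul_le_mul_of_nonneg_left (h4.trans h5.le) (by positivity)
    _ = Cc := by rw [ht2]; field_simp

lemma energy_identity {m c : ℝ → ℝ} (hm : ContDiff ℝ 2 m) (hc : Continuous c)
    {s lam : ℝ} {v : ℝ → ℝ} (hv : IsPrincipalEigenfunction m c lam s v) :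
    (∫ x in (0:ℝ)..1, (deriv v x - s * deriv m x * v x)^2)
      = lam - ∫ x in (0:ℝ)..1, c x * (v x)^2 := by
  obtain ⟨hv2, hvpos, hode, hb0, hb1, hnorm⟩ := hv
  have hv1 : ContDiff ℝ 1 (deriv v) := deriv_contDiff_of_two' hv2
  have hm1 : ContDiff ℝ 1 (deriv m) := deriv_contDiff_of_two' hm
  have hdv : ∀ x, HasDerivAt v (deriv v x) x := fun x =>
    ((hv2.differentiable (by norm_num)) x).hasDerivAt
  have hddv : ∀ x, HasDerivAt (deriv v) (deriv (deriv v) x) x := fun x =>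
    ((hv1.differentiable (by norm_num)) x).hasDerivAt
  have hdm : ∀ x, HasDerivAt m (deriv m x) x := fun x =>
    ((hm.differentiable (by norm_num)) x).hasDerivAt
  have hddm : ∀ x, HasDerivAt (deriv m) (deriv (deriv m) x) x := fun x =>
    ((hm1.differentiable (by norm_num)) x).hasDerivAt
  have hvc : Continuous v := hv2.continuous
  have hv'c : Continuous (deriv v) := hv1.continuous
  have hv''c : Continuous (deriv (deriv v)) := hv1.continuous_deriv le_rfl
  have hm'c : Continuous (deriv m) := hm1.continuous
  have hm''c : Continuous (deriv (deriv m)) := hm1.continuous_deriv le_rfl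
  set F : ℝ → ℝ := fun x => deriv v x * v x - s * (deriv m x * (v x)^2) with hF
  set F' : ℝ → ℝ := fun x => (deriv (deriv v) x * v x + deriv v x * deriv v x)
      - s * (deriv (deriv m) x * (v x)^2 + deriv m x * (2 * v x ^ 1 * deriv v x)) with hF'
  have hFd : ∀ x ∈ uIcc (0:ℝ) 1, HasDerivAt F (F' x) x := by
    intro x _
    exact ((hddv x).mul (hdv x)).sub
      (HasDerivAt.const_mul s ((hddm x).mul ((hdv x).pow 2)))
  have hF'c : Continuous F' := by fun_prop
  have hint : (∫ x in (0:ℝ)..1, F' x) = F 1 - F 0 :=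
    intervalIntegral.integral_eq_sub_of_hasDerivAt hFd (hF'c.intervalIntegrable 0 1)
  have hFbd : F 1 - F 0 = 0 := by
    simp only [hF]
    rw [hb0, hb1]; ring
  set G : ℝ → ℝ := fun x => (deriv v x - s * deriv m x * v x)^2 + (c x - lam) * (v x)^2
    with hG
  have hGF' : ∀ x ∈ Ioo (0:ℝ) 1, G x = F' x := by
    intro x hx
    have h := hode x hx
    simp only [hG, hF']
    linear_combination (v x) * h
  have hae : (∫ x in (0:ℝ)..1, G x) = ∫ x in (0:ℝ)..1, F' x := by
    apply intervalIntegral.integral_congr_ae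
    have h1 : ∀ᵐ x : ℝ, x ≠ 1 := by
      have hz : volume ({1} : Set ℝ) = 0 := Real.volume_singleton
      exact (measure_eq_zero_iff_ae_notMem.mp hz).mono (fun x hx => by simpa using hx)
    filter_upwards [h1] with x hx1 hxI
    rw [Set.uIoc_of_le (by norm_num : (0:ℝ) ≤ 1)] at hxI
    exact hGF' x ⟨hxI.1, lt_of_le_of_ne hxI.2 hx1⟩
  have hsplit : (∫ x in (0:ℝ)..1, G x)
      = (∫ x in (0:ℝ)..1, (deriv v x - s * deriv m x * v x)^2)
        + ((∫ x in (0:ℝ)..1, c x * (v x)^2) - lam * ∫ x in (0:ℝ)..1, (v x)^2) := by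
    have i1 : IntervalIntegrable (fun x => (deriv v x - s * deriv m x * v x)^2) volume 0 1 :=
      (by fun_prop : Continuous fun x => (deriv v x - s * deriv m x * v x)^2).intervalIntegrable 0 1
    have i2 : IntervalIntegrable (fun x => c x * (v x)^2) volume 0 1 :=
      (by fun_prop : Continuous fun x => c x * (v x)^2).intervalIntegrable 0 1
    have i3 : IntervalIntegrable (fun x => lam * (v x)^2) volume 0 1 :=
      (by fun_prop : Continuous fun x => lam * (v x)^2).intervalIntegrable 0 1
    have : (∫ x in (0:ℝ)..1, G x)
        = (∫ x in (0:ℝ)..1, (deriv v x - s * deriv m x * v x)^2)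
          + ∫ x in (0:ℝ)..1, (c x * (v x)^2 - lam * (v x)^2) := by
      rw [← intervalIntegral.integral_add i1 (i2.sub i3)]
      congr 1; ext x; simp only [hG]; ring
    rw [this, intervalIntegral.integral_sub i2 i3, intervalIntegral.integral_const_mul]
  rw [hae, hint, hFbd, hnorm] at hsplit
  linarith [hsplit]

lemma integral_sq_le_subinterval {f : ℝ → ℝ} (hf : Continuous f) {x ξ : ℝ}
    (h0 : 0 ≤ x) (hxξ : x ≤ ξ) (hξ : ξ ≤ 1) :
    (∫ t in x..ξ, (f t)^2) ≤ ∫ t in (0:ℝ)..1, (f t)^2 := by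
  have hi : ∀ p q : ℝ, IntervalIntegrable (fun t => (f t)^2) volume p q := fun p q =>
    ((hf.pow 2).intervalIntegrable p q)
  have e : (∫ t in (0:ℝ)..x, (f t)^2) + ((∫ t in x..ξ, (f t)^2) + (∫ t in ξ..(1:ℝ), (f t)^2))
      = ∫ t in (0:ℝ)..1, (f t)^2 := by
    rw [intervalIntegral.integral_add_adjacent_intervals (hi x ξ) (hi ξ 1),
        intervalIntegral.integral_add_adjacent_intervals (hi 0 x) (hi x 1)]
  have n1 : 0 ≤ ∫ t in (0:ℝ)..x, (f t)^2 :=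
    intervalIntegral.integral_nonneg h0 (fun t _ => sq_nonneg _)
  have n2 : 0 ≤ ∫ t in ξ..(1:ℝ), (f t)^2 :=
    intervalIntegral.integral_nonneg hξ (fun t _ => sq_nonneg _)
  linarith

lemma slope_lower {m : ℝ → ℝ} (hm : ContDiff ℝ 2 m) {b δ : ℝ}
    (hδ : ∀ t ∈ Icc (0:ℝ) b, δ ≤ deriv m t) :
    ∀ ⦃x t : ℝ⦄, 0 ≤ x → x ≤ t → t ≤ b → δ * (t - x) ≤ m t - m x := by
  have hdm : Differentiable ℝ m := hm.differentiable (by norm_num)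
  have hmono : MonotoneOn (fun t => m t - δ * t) (Icc (0:ℝ) b) := by
    have hdiff : Differentiable ℝ (fun t : ℝ => m t - δ * t) := by fun_prop
    apply monotoneOn_of_deriv_nonneg (convex_Icc 0 b) hdiff.continuous.continuousOn
      hdiff.differentiableOn
    intro x hx
    rw [interior_Icc] at hx
    have hd1 : HasDerivAt (fun t : ℝ => m t - δ * t) (deriv m x - δ) x :=
      (hdm x).hasDerivAt.sub (by simpa using (hasDerivAt_id x).const_mul δ)
    rw [hd1.deriv]
    have := hδ x ⟨hx.1.le, hx.2.le⟩
    linarith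
  intro x t hx hxt htb
  have := hmono ⟨hx, le_trans hxt htb⟩ ⟨le_trans hx hxt, htb⟩ hxt
  simp only at this
  linarith

lemma exp_integral_bound {m : ℝ → ℝ} (hmc : Continuous m) {s δ x ξ : ℝ}
    (hs : 0 < s) (hδ : 0 < δ) (hxξ : x ≤ ξ)
    (hslope : ∀ t ∈ Icc x ξ, δ * (t - x) ≤ m t - m x) :
    (∫ t in x..ξ, Real.exp (2*s*(m x - m t))) ≤ 1/(2*s*δ) := by
  have hint1 : IntervalIntegrable (fun t => Real.exp (2*s*(m x - m t))) volume x ξ :=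
    (Real.continuous_exp.comp (by fun_prop)).intervalIntegrable x ξ
  have hint2 : IntervalIntegrable (fun t => Real.exp (-(2*s*δ)*(t - x))) volume x ξ :=
    (Real.continuous_exp.comp (by fun_prop)).intervalIntegrable x ξ
  have h1 : (∫ t in x..ξ, Real.exp (2*s*(m x - m t)))
      ≤ ∫ t in x..ξ, Real.exp (-(2*s*δ)*(t - x)) := by
    apply intervalIntegral.integral_mono_on hxξ hint1 hint2
    intro t ht
    apply Real.exp_le_exp.2
    have := hslope t ht
    nlinarith
  have hH : ∀ t ∈ uIcc x ξ, HasDerivAt (fun t => -(2*s*δ)⁻¹ * Real.exp (-(2*s*δ)*(t-x)))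
      (Real.exp (-(2*s*δ)*(t - x))) t := by
    intro t _
    have hlin : HasDerivAt (fun t : ℝ => -(2*s*δ)*(t-x)) (-(2*s*δ)) t := by
      simpa using ((hasDerivAt_id t).sub_const x).const_mul (-(2*s*δ))
    have : HasDerivAt (fun t => -(2*s*δ)⁻¹ * Real.exp (-(2*s*δ)*(t-x)))
        (-(2*s*δ)⁻¹ * (Real.exp (-(2*s*δ)*(t-x)) * -(2*s*δ))) t :=
      (hlin.exp).const_mul (-(2*s*δ)⁻¹)
    convert this using 1
    field_simp
  have h2 : (∫ t in x..ξ, Real.exp (-(2*s*δ)*(t - x)))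
      = -(2*s*δ)⁻¹ * Real.exp (-(2*s*δ)*(ξ-x)) - -(2*s*δ)⁻¹ * Real.exp (-(2*s*δ)*(x-x)) :=
    intervalIntegral.integral_eq_sub_of_hasDerivAt hH hint2
  have hexp1 : Real.exp (-(2*s*δ)*(x-x)) = 1 := by simp
  have hexp2 : 0 < Real.exp (-(2*s*δ)*(ξ-x)) := Real.exp_pos _
  rw [hexp1] at h2
  have h3 : -(2*s*δ)⁻¹ * Real.exp (-(2*s*δ)*(ξ-x)) - -(2*s*δ)⁻¹ * 1 ≤ (2*s*δ)⁻¹ := by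
    have hp : 0 < (2*s*δ)⁻¹ := by positivity
    nlinarith
  calc (∫ t in x..ξ, Real.exp (2*s*(m x - m t)))
      ≤ ∫ t in x..ξ, Real.exp (-(2*s*δ)*(t - x)) := h1
    _ = _ := h2
    _ ≤ (2*s*δ)⁻¹ := h3
    _ = 1/(2*s*δ) := by rw [one_div]

lemma repr_formula {m : ℝ → ℝ} (hm : ContDiff ℝ 2 m) {w : ℝ → ℝ} (hw : ContDiff ℝ 2 w)
    (s x ξ : ℝ) :
    w x = Real.exp (s*(m x - m ξ)) * w ξ
      - ∫ t in x..ξ, Real.exp (s*(m x - m t)) * (deriv w t - s * deriv m t * w t) := by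
  have hdm : Differentiable ℝ m := hm.differentiable (by norm_num)
  have hdw : Differentiable ℝ w := hw.differentiable (by norm_num)
  have hw'c : Continuous (deriv w) := hw.continuous_deriv (by norm_num)
  have hm'c : Continuous (deriv m) := hm.continuous_deriv (by norm_num)
  set g : ℝ → ℝ := fun t => Real.exp (-(s * m t)) * w t with hg
  have hgd : ∀ t, HasDerivAt g (Real.exp (-(s * m t)) * (deriv w t - s * deriv m t * w t)) t := by
    intro t
    have h1 : HasDerivAt (fun t => -(s * m t)) (-(s * deriv m t)) t := by
      exact ((hdm t).hasDerivAt.const_mul s).neg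
    have h2 : HasDerivAt g (Real.exp (-(s * m t)) * -(s * deriv m t) * w t
        + Real.exp (-(s * m t)) * deriv w t) t := (h1.exp).mul (hdw t).hasDerivAt
    convert h2 using 1
    ring
  have hint : IntervalIntegrable (fun t => Real.exp (-(s * m t)) * (deriv w t - s * deriv m t * w t)) volume x ξ :=
    (by fun_prop : Continuous fun t => Real.exp (-(s * m t)) * (deriv w t - s * deriv m t * w t)).intervalIntegrable x ξ
  have h3 : (∫ t in x..ξ, Real.exp (-(s * m t)) * (deriv w t - s * deriv m t * w t)) = g ξ - g x :=
    intervalIntegral.integral_eq_sub_of_hasDerivAt (fun t _ => hgd t) hint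
  have e2 : Real.exp (s * m x) * Real.exp (-(s * m x)) = 1 := by
    rw [← Real.exp_add]; simp
  have h4 : Real.exp (s * m x) * (g ξ - g x)
      = Real.exp (s*(m x - m ξ)) * w ξ - w x := by
    simp only [hg]
    have e1 : Real.exp (s*(m x - m ξ)) = Real.exp (s*m x) * Real.exp (-(s * m ξ)) := by
      rw [← Real.exp_add]; congr 1; ring
    rw [e1]
    linear_combination (-(w x)) * e2
  have h5 : (∫ t in x..ξ, Real.exp (s*(m x - m t)) * (deriv w t - s * deriv m t * w t))
      = Real.exp (s * m x) * ∫ t in x..ξ, Real.exp (-(s * m t)) * (deriv w t - s * deriv m t * w t) := by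
    rw [← intervalIntegral.integral_const_mul]
    congr 1; ext t
    have e3 : Real.exp (s*(m x - m t)) = Real.exp (s*m x) * Real.exp (-(s * m t)) := by
      rw [← Real.exp_add]; congr 1; ring
    rw [e3]; ring
  rw [h5, h3, h4]
  ring

lemma amgm_point {σ p q : ℝ} (hσ : 0 < σ) (hp : 0 < p) :
    p * |q| ≤ σ/2 * (p*p) + 1/(2*σ) * q^2 := by
  have key2 : 2*σ*(p*|q|) ≤ σ^2*(p*p) + q^2 := by
    nlinarith [sq_nonneg (σ*p - |q|), sq_abs q]
  have expand : σ/2*(p*p) + 1/(2*σ)*q^2 = (σ^2*(p*p) + q^2)/(2*σ) := by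
    field_simp
  rw [expand, le_div_iff₀ (by positivity)]
  linarith [key2]

lemma tendsto_sqrt_atTop' : Tendsto Real.sqrt atTop atTop := by
  apply tendsto_atTop_atTop.mpr
  intro b
  refine ⟨b^2, fun x hx => le_trans (le_abs_self b) ?_⟩
  rw [← Real.sqrt_sq_eq_abs]
  exact Real.sqrt_le_sqrt hx

/-- Lemma 2.3 (ii): if `m' > 0` on `[0,a)`, then the principal eigenfunctions
`w(s,·)` tend to `0` locally uniformly in `[0,a)` as `s → ∞`. -/
theorem eigenfunction_tendsto_zero_locally_uniformly_of_deriv_pos_left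
    (m c : ℝ → ℝ) (hm : ContDiff ℝ 2 m) (hc : Continuous c)
    (w : ℝ → ℝ → ℝ)
    (hw : ∀ s > (0:ℝ), IsPrincipalEigenfunction m c (lambdaN m c s) s (w s))
    (a : ℝ) (ha : 0 < a) (ha1 : a ≤ 1)
    (hm' : ∀ x ∈ Set.Ico (0:ℝ) a, 0 < deriv m x) :
    ∀ K : Set ℝ, IsCompact K → K ⊆ Set.Ico (0:ℝ) a →
      TendstoUniformlyOn (fun s x => w s x) (fun _ => (0:ℝ)) Filter.atTop K := by
  intro K hK hKsub
  rcases K.eq_empty_or_nonempty with rfl | hKne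
  · exact tendstoUniformlyOn_empty
  have hm'cd : ContDiff ℝ 1 (deriv m) := deriv_contDiff_of_two' hm
  have hm'c : Continuous (deriv m) := hm'cd.continuous
  set κ := sSup K with hκdef
  have hκK : κ ∈ K := hK.sSup_mem hKne
  obtain ⟨hκ0, hκa⟩ := hKsub hκK
  set d := (a - κ)/3 with hddef
  have hd : 0 < d := by rw [hddef]; linarith
  set b₁ := κ + d with hb₁def
  set b₂ := κ + 2*d with hb₂def
  have hb₂a : b₂ < a := by rw [hb₂def, hddef]; linarith
  have hb₂1 : b₂ ≤ 1 := le_of_lt (lt_of_lt_of_le hb₂a ha1)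
  have hb₂0 : (0:ℝ) ≤ b₂ := by rw [hb₂def]; linarith
  have hb₁0 : (0:ℝ) ≤ b₁ := by rw [hb₁def]; linarith
  have hb₁b₂ : b₁ ≤ b₂ := by rw [hb₁def, hb₂def]; linarith
  -- uniform lower bound δ on deriv m over [0, b₂]
  obtain ⟨t₀, ht₀, hmin⟩ := isCompact_Icc.exists_isMinOn (nonempty_Icc.2 hb₂0)
    hm'c.continuousOn
  set δ := deriv m t₀ with hδdef
  have hδpos : 0 < δ := hm' t₀ ⟨ht₀.1, lt_of_le_of_lt ht₀.2 hb₂a⟩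
  have hδle : ∀ t ∈ Icc (0:ℝ) b₂, δ ≤ deriv m t := fun t ht => hmin ht
  have hslope := slope_lower hm hδle
  -- bound on c
  obtain ⟨Cc, hCcn⟩ := isCompact_Icc.exists_bound_of_continuousOn hc.continuousOn
  have hCc' : ∀ x ∈ Icc (0:ℝ) 1, |c x| ≤ Cc := by
    intro x hx; simpa [Real.norm_eq_abs] using hCcn x hx
  have hCc0 : 0 ≤ Cc := le_trans (abs_nonneg _) (hCc' 0 (by norm_num))
  set W := Real.sqrt (1/d) with hWdef
  have hW0 : 0 ≤ W := Real.sqrt_nonneg _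
  -- key pointwise estimate
  have key : ∀ s : ℝ, 1 ≤ s → ∀ x ∈ K,
      |w s x| ≤ Real.exp (-(s*δ*d)) * W + (1/(4*δ) + Cc)/Real.sqrt s := by
    intro s hs1 x hxK
    have hs0 : (0:ℝ) < s := lt_of_lt_of_le one_pos hs1
    obtain ⟨hw2, hwpos, hode, hbc0, hbc1, hnorm⟩ := hw s hs0
    have hmc : Continuous m := hm.continuous
    have hwc : Continuous (w s) := hw2.continuous
    have hw'c : Continuous (deriv (w s)) := hw2.continuous_deriv (by norm_num)
    set u : ℝ → ℝ := fun t => deriv (w s) t - s * deriv m t * w s t with hu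
    have huc : Continuous u := by fun_prop
    -- energy bound
    have hEid : (∫ t in (0:ℝ)..1, (deriv (w s) t - s * deriv m t * w s t)^2)
        = lambdaN m c s - ∫ t in (0:ℝ)..1, c t * (w s t)^2 :=
      energy_identity hm hc ⟨hw2, hwpos, hode, hbc0, hbc1, hnorm⟩
    have hlam : lambdaN m c s ≤ Cc := lambdaN_le hm.continuous hc hCc' s
    have hcint : -Cc ≤ ∫ t in (0:ℝ)..1, c t * (w s t)^2 := by
      have h1 : ∫ t in (0:ℝ)..1, (-Cc) * (w s t)^2 ≤ ∫ t in (0:ℝ)..1, c t * (w s t)^2 := by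
        apply intervalIntegral.integral_mono_on zero_le_one
          ((by fun_prop : Continuous fun t => (-Cc) * (w s t)^2).intervalIntegrable 0 1)
          ((by fun_prop : Continuous fun t => c t * (w s t)^2).intervalIntegrable 0 1)
        intro t ht
        have h2 := neg_le_of_abs_le (hCc' t ht)
        nlinarith [sq_nonneg (w s t)]
      rwa [intervalIntegral.integral_const_mul, hnorm, mul_one] at h1
    have hE : (∫ t in (0:ℝ)..1, (u t)^2) ≤ 2*Cc := by
      simp only [hu]; rw [hEid]; linarith
    -- a small value point ξ in [b₁, b₂]
    obtain ⟨ξ, hξmem, hξmin⟩ := isCompact_Icc.exists_isMinOn (nonempty_Icc.2 hb₁b₂)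
      (hwc.continuousOn : ContinuousOn (w s) (Icc b₁ b₂))
    have hξ01 : ξ ∈ Icc (0:ℝ) 1 := ⟨by linarith [hξmem.1], by linarith [hξmem.2]⟩
    have hwξpos : 0 < w s ξ := hwpos ξ hξ01
    have hwξ2 : (w s ξ)^2 * d ≤ 1 := by
      have h1 : (∫ _t in b₁..b₂, (w s ξ)^2) ≤ ∫ t in b₁..b₂, (w s t)^2 := by
        apply intervalIntegral.integral_mono_on hb₁b₂
          (intervalIntegrable_const)
          ((hwc.pow 2).intervalIntegrable b₁ b₂)
        intro t ht
        have h01 : t ∈ Icc (0:ℝ) 1 := ⟨by linarith [ht.1], by linarith [ht.2]⟩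
        have h2 : w s ξ ≤ w s t := hξmin ht
        have h3 := hwpos t h01
        exact pow_le_pow_left₀ hwξpos.le h2 2
      have h2 := integral_sq_le_subinterval hwc hb₁0 hb₁b₂ hb₂1
      rw [hnorm] at h2
      rw [intervalIntegral.integral_const, smul_eq_mul] at h1
      have hbb : b₂ - b₁ = d := by rw [hb₁def, hb₂def]; ring
      rw [hbb] at h1
      nlinarith
    have hwξW : w s ξ ≤ W := by
      rw [hWdef, Real.le_sqrt hwξpos.le (by positivity)]
      rw [le_div_iff₀ hd]
      exact hwξ2
    -- facts about x
    obtain ⟨hx0, hxa⟩ := hKsub hxK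
    have hxκ : x ≤ κ := le_csSup hK.bddAbove hxK
    have hxξ : x ≤ ξ := by linarith [hξmem.1]
    have hξb₂ : ξ ≤ b₂ := hξmem.2
    -- representation
    have hrepr := repr_formula hm hw2 s x ξ
    -- bound on A
    have hA : Real.exp (s*(m x - m ξ)) * w s ξ ≤ Real.exp (-(s*δ*d)) * W := by
      have hmm : δ * (ξ - x) ≤ m ξ - m x := hslope hx0 hxξ hξb₂
      have h1 : s*(m x - m ξ) ≤ -(s*δ*d) := by
        have h2 : δ * d ≤ δ * (ξ - x) := by
          apply mul_le_mul_of_nonneg_left _ hδpos.le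
          have h2' : b₁ ≤ ξ := hξmem.1
          rw [hb₁def] at h2'; linarith
        have h3 : δ * d ≤ m ξ - m x := le_trans h2 hmm
        have h4 := mul_le_mul_of_nonneg_left h3 hs0.le
        linarith [h4]
      exact mul_le_mul (Real.exp_le_exp.2 h1) hwξW hwξpos.le (Real.exp_pos _).le
    -- bound on B
    set σ := Real.sqrt s with hσdef
    have hσ : σ^2 = s := Real.sq_sqrt hs0.le
    have hσpos : 0 < σ := Real.sqrt_pos.2 hs0
    have hB : |∫ t in x..ξ, Real.exp (s*(m x - m t)) * u t| ≤ (1/(4*δ) + Cc)/σ := by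
      have hcont1 : Continuous fun t => Real.exp (s*(m x - m t)) * u t := by fun_prop
      have hcont2 : Continuous fun t => Real.exp (2*s*(m x - m t)) := by fun_prop
      have h1 : |∫ t in x..ξ, Real.exp (s*(m x - m t)) * u t|
          ≤ ∫ t in x..ξ, |Real.exp (s*(m x - m t)) * u t| :=
        intervalIntegral.abs_integral_le_integral_abs hxξ
      have h2 : (∫ t in x..ξ, |Real.exp (s*(m x - m t)) * u t|)
          ≤ ∫ t in x..ξ, (σ/2 * Real.exp (2*s*(m x - m t)) + 1/(2*σ) * (u t)^2) := by
        apply intervalIntegral.integral_mono_on hxξ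
          (hcont1.abs.intervalIntegrable x ξ)
          ((by fun_prop : Continuous fun t =>
            σ/2 * Real.exp (2*s*(m x - m t)) + 1/(2*σ) * (u t)^2).intervalIntegrable x ξ)
        intro t ht
        have hpp : Real.exp (s*(m x - m t)) * Real.exp (s*(m x - m t))
            = Real.exp (2*s*(m x - m t)) := by
          rw [← Real.exp_add]; congr 1; ring
        rw [abs_mul, abs_of_pos (Real.exp_pos _)]
        have h := amgm_point (σ := σ) (p := Real.exp (s*(m x - m t))) (q := u t)
          hσpos (Real.exp_pos _)
        rw [hpp] at h
        exact h
      have h3 : (∫ t in x..ξ, (σ/2 * Real.exp (2*s*(m x - m t)) + 1/(2*σ) * (u t)^2))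
          = σ/2 * (∫ t in x..ξ, Real.exp (2*s*(m x - m t)))
            + 1/(2*σ) * ∫ t in x..ξ, (u t)^2 := by
        rw [← intervalIntegral.integral_const_mul, ← intervalIntegral.integral_const_mul,
          ← intervalIntegral.integral_add (f := fun t => σ/2 * Real.exp (2*s*(m x - m t)))
            (g := fun t => 1/(2*σ) * (u t)^2)
            ((continuous_const.mul hcont2).intervalIntegrable x ξ :
              IntervalIntegrable (fun t => σ/2 * Real.exp (2*s*(m x - m t))) volume x ξ)
            ((continuous_const.mul (huc.pow 2)).intervalIntegrable x ξ :
              IntervalIntegrable (fun t => 1/(2*σ) * (u t)^2) volume x ξ)]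
      have h4 : (∫ t in x..ξ, Real.exp (2*s*(m x - m t))) ≤ 1/(2*s*δ) :=
        exp_integral_bound hm.continuous hs0 hδpos hxξ
          (fun t ht => hslope hx0 ht.1 (le_trans ht.2 hξb₂))
      have h5 : (∫ t in x..ξ, (u t)^2) ≤ 2*Cc := by
        refine le_trans (integral_sq_le_subinterval huc hx0 hxξ ?_) hE
        exact le_trans hξb₂ hb₂1
      have h6 : 0 ≤ ∫ t in x..ξ, Real.exp (2*s*(m x - m t)) :=
        intervalIntegral.integral_nonneg hxξ (fun t _ => (Real.exp_pos _).le)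
      have harith : σ/2 * (1/(2*(σ^2)*δ)) + 1/(2*σ)*(2*Cc) = (1/(4*δ)+Cc)/σ := by
        field_simp; ring
      rw [hσ] at harith
      calc |∫ t in x..ξ, Real.exp (s*(m x - m t)) * u t|
          ≤ ∫ t in x..ξ, |Real.exp (s*(m x - m t)) * u t| := h1
        _ ≤ ∫ t in x..ξ, (σ/2 * Real.exp (2*s*(m x - m t)) + 1/(2*σ) * (u t)^2) := h2
        _ = σ/2 * (∫ t in x..ξ, Real.exp (2*s*(m x - m t)))
            + 1/(2*σ) * ∫ t in x..ξ, (u t)^2 := h3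
        _ ≤ σ/2 * (1/(2*s*δ)) + 1/(2*σ)*(2*Cc) := by
            have m1 : σ/2 * (∫ t in x..ξ, Real.exp (2*s*(m x - m t))) ≤ σ/2 * (1/(2*s*δ)) :=
              mul_le_mul_of_nonneg_left h4 (by positivity)
            have m2 : 1/(2*σ) * (∫ t in x..ξ, (u t)^2) ≤ 1/(2*σ)*(2*Cc) :=
              mul_le_mul_of_nonneg_left h5 (by positivity)
            linarith
        _ = (1/(4*δ)+Cc)/σ := harith
    -- combine
    rw [hrepr]
    calc |Real.exp (s*(m x - m ξ)) * w s ξ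
          - ∫ t in x..ξ, Real.exp (s*(m x - m t)) * (deriv (w s) t - s * deriv m t * w s t)|
        ≤ |Real.exp (s*(m x - m ξ)) * w s ξ|
          + |∫ t in x..ξ, Real.exp (s*(m x - m t)) * (deriv (w s) t - s * deriv m t * w s t)| :=
          abs_sub _ _
      _ ≤ Real.exp (-(s*δ*d)) * W + (1/(4*δ) + Cc)/Real.sqrt s := by
          have e1 : |Real.exp (s*(m x - m ξ)) * w s ξ| = Real.exp (s*(m x - m ξ)) * w s ξ :=
            abs_of_pos (mul_pos (Real.exp_pos _) hwξpos)
          rw [e1]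
          exact add_le_add hA hB
  -- pass to the limit
  rw [Metric.tendstoUniformlyOn_iff]
  intro ε hε
  have hlim : Tendsto (fun s : ℝ => Real.exp (-(s*δ*d)) * W + (1/(4*δ)+Cc)/Real.sqrt s)
      atTop (nhds 0) := by
    have l1 : Tendsto (fun s : ℝ => Real.exp (-(s*δ*d))) atTop (nhds 0) := by
      apply Real.tendsto_exp_atBot.comp
      rw [show (fun s : ℝ => -(s*δ*d)) = (fun s : ℝ => -(s*δ*d)) from rfl]
      apply tendsto_neg_atBot_iff.mpr
      exact (tendsto_id.atTop_mul_const hδpos).atTop_mul_const hd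
    have l2 : Tendsto (fun s : ℝ => (1/(4*δ)+Cc)/Real.sqrt s) atTop (nhds 0) := by
      have h1 : Tendsto (fun s : ℝ => (Real.sqrt s)⁻¹) atTop (nhds 0) :=
        tendsto_sqrt_atTop'.inv_tendsto_atTop
      have h2 := h1.const_mul (1/(4*δ)+Cc)
      rw [mul_zero] at h2
      simpa [div_eq_mul_inv] using h2
    have := (l1.mul_const W).add l2
    simpa using this
  have hev : ∀ᶠ s : ℝ in atTop,
      Real.exp (-(s*δ*d)) * W + (1/(4*δ)+Cc)/Real.sqrt s < ε :=
    hlim.eventually_lt_const hε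
  filter_upwards [hev, eventually_ge_atTop (1:ℝ)] with s hsΦ hs1
  intro x hxK
  have hb := key s hs1 x hxK
  rw [Real.dist_eq]
  calc |0 - w s x| = |w s x| := by rw [zero_sub, abs_neg]
    _ ≤ Real.exp (-(s*δ*d)) * W + (1/(4*δ)+Cc)/Real.sqrt s := hb
    _ < ε := hsΦ
end

section
/- Assume [a₁,a₂] ⊆ [0,1] with a₁ < a₂, and that m is strictly increasing on [a₁,a₂] or m is strictly decreasing on [a₁,a₂]. Then μ((a₁,a₂)) = 0. -/
set_option maxHeartbeats 1000000


open MeasureTheory Filter Set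

lemma lambdaN_bounds (m c : ℝ → ℝ) (hm : Continuous m) (hc : Continuous c)
    (s : ℝ) (cmin cmax : ℝ)
    (hmin : ∀ x ∈ Set.Icc (0:ℝ) 1, cmin ≤ c x)
    (hmax : ∀ x ∈ Set.Icc (0:ℝ) 1, c x ≤ cmax) :
    cmin ≤ lambdaN m c s ∧ lambdaN m c s ≤ cmax := by
  have hEc : Continuous (fun x => Real.exp (2 * s * m x)) :=
    Real.continuous_exp.comp ((continuous_const.mul hm))
  have hEpos : ∀ x, 0 < Real.exp (2 * s * m x) := fun x => Real.exp_pos _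
  have hlow : ∀ l ∈ {l : ℝ | ∃ φ : ℝ → ℝ, ContDiff ℝ 1 φ ∧
      (∫ x in (0:ℝ)..1, Real.exp (2 * s * m x) * (φ x) ^ 2) = 1 ∧
      l = ∫ x in (0:ℝ)..1, Real.exp (2 * s * m x) * ((deriv φ x) ^ 2 + c x * (φ x) ^ 2)},
      cmin ≤ l := by
    rintro l ⟨φ, hφ, hnorm, rfl⟩
    have hφc : Continuous φ := hφ.continuous
    have hφ'c : Continuous (deriv φ) := hφ.continuous_deriv le_rfl
    have hint1 : IntervalIntegrable (fun x => cmin * (Real.exp (2 * s * m x) * (φ x) ^ 2))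
        volume 0 1 :=
      (continuous_const.mul (hEc.mul (hφc.pow 2))).intervalIntegrable _ _
    have hint2 : IntervalIntegrable
        (fun x => Real.exp (2 * s * m x) * ((deriv φ x) ^ 2 + c x * (φ x) ^ 2)) volume 0 1 :=
      (hEc.mul (((hφ'c.pow 2)).add (hc.mul (hφc.pow 2)))).intervalIntegrable _ _
    have hmono : (∫ x in (0:ℝ)..1, cmin * (Real.exp (2 * s * m x) * (φ x) ^ 2))
        ≤ ∫ x in (0:ℝ)..1, Real.exp (2 * s * m x) * ((deriv φ x) ^ 2 + c x * (φ x) ^ 2) := by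
      apply intervalIntegral.integral_mono_on (by norm_num) hint1 hint2
      intro x hx
      have h1 := mul_le_mul_of_nonneg_right (hmin x hx) (sq_nonneg (φ x))
      have h2 : 0 ≤ (deriv φ x) ^ 2 := sq_nonneg _
      have h3 := hEpos x
      nlinarith
    calc cmin = cmin * ∫ x in (0:ℝ)..1, Real.exp (2 * s * m x) * (φ x)^2 := by rw [hnorm]; ring
      _ = ∫ x in (0:ℝ)..1, cmin * (Real.exp (2 * s * m x) * (φ x) ^ 2) := by
          rw [intervalIntegral.integral_const_mul]
      _ ≤ _ := hmono
  have hIpos : 0 < ∫ x in (0:ℝ)..1, Real.exp (2 * s * m x) :=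
    intervalIntegral.intervalIntegral_pos_of_pos_on (hEc.intervalIntegrable _ _)
      (fun x _ => hEpos x) one_pos
  set I := ∫ x in (0:ℝ)..1, Real.exp (2 * s * m x) with hI
  set K : ℝ := Real.sqrt I⁻¹ with hK
  have hK2 : K ^ 2 = I⁻¹ := Real.sq_sqrt (by positivity)
  have hnormK : (∫ x in (0:ℝ)..1, Real.exp (2 * s * m x) * ((fun _:ℝ => K) x) ^ 2) = 1 := by
    simp only
    rw [intervalIntegral.integral_mul_const, ← hI, hK2, mul_inv_cancel₀ (ne_of_gt hIpos)]
  have hmem : (∫ x in (0:ℝ)..1,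
      Real.exp (2 * s * m x) * ((deriv (fun _:ℝ => K) x) ^ 2 + c x * ((fun _:ℝ => K) x) ^ 2))
      ∈ {l : ℝ | ∃ φ : ℝ → ℝ, ContDiff ℝ 1 φ ∧
      (∫ x in (0:ℝ)..1, Real.exp (2 * s * m x) * (φ x) ^ 2) = 1 ∧
      l = ∫ x in (0:ℝ)..1, Real.exp (2 * s * m x) * ((deriv φ x) ^ 2 + c x * (φ x) ^ 2)} :=
    ⟨fun _ => K, contDiff_const, hnormK, rfl⟩
  have hub : (∫ x in (0:ℝ)..1,
      Real.exp (2 * s * m x) * ((deriv (fun _:ℝ => K) x) ^ 2 + c x * ((fun _:ℝ => K) x) ^ 2))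
      ≤ cmax := by
    simp only [deriv_const']
    have h1 : (∫ x in (0:ℝ)..1, Real.exp (2 * s * m x) * ((0:ℝ) ^ 2 + c x * K ^ 2))
        ≤ ∫ x in (0:ℝ)..1, Real.exp (2 * s * m x) * (cmax * K ^ 2) := by
      apply intervalIntegral.integral_mono_on (by norm_num)
        ((hEc.mul ((continuous_const.pow 2).add (hc.mul continuous_const))).intervalIntegrable _ _)
        ((hEc.mul continuous_const).intervalIntegrable _ _)
      intro x hx
      have h3 := hEpos x
      have h4 := hmax x hx
      have h5 : (0:ℝ) ≤ K ^ 2 := sq_nonneg _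
      show Real.exp (2 * s * m x) * ((0:ℝ) ^ 2 + c x * K ^ 2) ≤ Real.exp (2 * s * m x) * (cmax * K ^ 2)
      nlinarith [mul_nonneg (mul_nonneg h3.le (sub_nonneg.mpr h4)) h5]
    refine h1.trans ?_
    rw [intervalIntegral.integral_mul_const, ← hI, hK2]
    rw [show I * (cmax * I⁻¹) = cmax * (I * I⁻¹) by ring, mul_inv_cancel₀ (ne_of_gt hIpos)]
    simp
  exact ⟨le_csInf ⟨_, hmem⟩ hlow, (csInf_le ⟨cmin, hlow⟩ hmem).trans hub⟩

lemma J_bound (m c : ℝ → ℝ) (hm : ContDiff ℝ 2 m) (hc : Continuous c)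
    (s lam M : ℝ) (w : ℝ → ℝ) (hw2 : ContDiff ℝ 2 w)
    (hode : ∀ x ∈ Set.Ioo (0:ℝ) 1,
      -(deriv (deriv w) x) + (s ^ 2 * (deriv m x) ^ 2 + s * deriv (deriv m) x + c x) * w x
        = lam * w x)
    (hb0 : deriv w 0 = s * w 0 * deriv m 0) (hb1 : deriv w 1 = s * w 1 * deriv m 1)
    (hnorm : (∫ x in (0:ℝ)..1, (w x) ^ 2) = 1)
    (hM : ∀ x ∈ Set.Icc (0:ℝ) 1, |c x - lam| ≤ M) :
    ∀ x ∈ Set.Icc (0:ℝ) 1, |w x * deriv w x - s * (deriv m x * (w x) ^ 2)| ≤ M := by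
  have hw2' : ContDiff ℝ ((1:ℕ)+1) w := by exact_mod_cast hw2
  rw [contDiff_succ_iff_deriv] at hw2'
  have hwd : Differentiable ℝ w := hw2'.1
  have hwdc : ContDiff ℝ 1 (deriv w) := hw2'.2.2
  have hwc : Continuous w := hwd.continuous
  have hw'c : Continuous (deriv w) := hwdc.continuous
  have hw'd : Differentiable ℝ (deriv w) := hwdc.differentiable one_ne_zero
  have hw''c : Continuous (deriv (deriv w)) := hwdc.continuous_deriv le_rfl
  have hm2' : ContDiff ℝ ((1:ℕ)+1) m := by exact_mod_cast hm
  rw [contDiff_succ_iff_deriv] at hm2'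
  have hmd : Differentiable ℝ m := hm2'.1
  have hmdc : ContDiff ℝ 1 (deriv m) := hm2'.2.2
  have hm'c : Continuous (deriv m) := hmdc.continuous
  have hm'd : Differentiable ℝ (deriv m) := hmdc.differentiable one_ne_zero
  have hm''c : Continuous (deriv (deriv m)) := hmdc.continuous_deriv le_rfl
  set J : ℝ → ℝ := fun t => w t * deriv w t - s * (deriv m t * (w t) ^ 2) with hJdef
  set D : ℝ → ℝ := fun t => (deriv w t) ^ 2 + w t * deriv (deriv w) t
    - s * (deriv (deriv m) t * (w t) ^ 2 + deriv m t * (2 * w t * deriv w t)) with hDdef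
  have hJ : ∀ t, HasDerivAt J (D t) t := by
    intro t
    have h1 : HasDerivAt w (deriv w t) t := (hwd t).hasDerivAt
    have h2 : HasDerivAt (deriv w) (deriv (deriv w) t) t := (hw'd t).hasDerivAt
    have h3 : HasDerivAt (deriv m) (deriv (deriv m) t) t := (hm'd t).hasDerivAt
    have h4 : HasDerivAt (fun t => w t * deriv w t)
        (deriv w t * deriv w t + w t * deriv (deriv w) t) t := h1.mul h2
    have h5 : HasDerivAt (fun t => (w t) ^ 2) (2 * w t * deriv w t) t := by
      have : HasDerivAt (fun t => w t ^ 2) _ t := h1.pow 2; simpa [mul_comm, mul_assoc, mul_left_comm] using this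
    have h6 : HasDerivAt (fun t => deriv m t * (w t) ^ 2)
        (deriv (deriv m) t * (w t) ^ 2 + deriv m t * (2 * w t * deriv w t)) t := h3.mul h5
    have : HasDerivAt (fun t => w t * deriv w t - s * (deriv m t * (w t) ^ 2)) _ t :=
      h4.sub (h6.const_mul s)
    convert this using 1
    simp [hDdef]; ring
  have hDc : Continuous D := by
    apply Continuous.sub ((hw'c.pow 2).add (hwc.mul hw''c))
    exact continuous_const.mul ((hm''c.mul (hwc.pow 2)).add
      (hm'c.mul ((continuous_const.mul hwc).mul hw'c)))
  set G : ℝ → ℝ := fun t => (deriv w t - s * (deriv m t * w t)) ^ 2 + (c t - lam) * (w t) ^ 2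
    with hGdef
  have hGc : Continuous G := by
    apply Continuous.add ((hw'c.sub (continuous_const.mul (hm'c.mul hwc))).pow 2)
    exact (hc.sub continuous_const).mul (hwc.pow 2)
  have hDG : ∀ t ∈ Set.Ioo (0:ℝ) 1, D t = G t := by
    intro t ht
    have h := hode t ht
    have hode' : deriv (deriv w) t
        = (s ^ 2 * (deriv m t) ^ 2 + s * deriv (deriv m) t + c t - lam) * w t := by linarith
    simp only [hDdef, hGdef, hode']; ring
  have hJ0 : J 0 = 0 := by simp only [hJdef]; rw [hb0]; ring
  have hJ1 : J 1 = 0 := by simp only [hJdef]; rw [hb1]; ring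
  have hw2int : ∀ u v : ℝ, IntervalIntegrable (fun t => (w t)^2) volume u v :=
    fun u v => ((hwc.pow 2)).intervalIntegrable _ _
  have hMnn : 0 ≤ M := le_trans (abs_nonneg _) (hM 0 (by norm_num))
  -- key integral bound : for 0 ≤ x ≤ y ≤ 1, J y - J x ≥ -M
  have key : ∀ x y : ℝ, 0 ≤ x → x ≤ y → y ≤ 1 → J y - J x ≥ -M := by
    intro x y hx hxy hy
    have hfund : ∫ t in x..y, D t = J y - J x :=
      intervalIntegral.integral_eq_sub_of_hasDerivAt (fun t _ => hJ t)
        (hDc.intervalIntegrable _ _)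
    have hae : ∀ᵐ t ∂(volume : Measure ℝ), t ∈ Set.uIoc x y → D t = G t := by
      have h1 : (volume : Measure ℝ) {(1:ℝ)} = 0 := Real.volume_singleton
      rw [MeasureTheory.ae_iff]
      refine MeasureTheory.measure_mono_null (fun t ht => ?_) h1
      simp only [Set.mem_setOf_eq, not_forall] at ht
      obtain ⟨htmem, htne⟩ := ht
      rw [Set.uIoc_of_le hxy] at htmem
      simp only [Set.mem_singleton_iff]
      by_contra hne
      exact htne (hDG t ⟨lt_of_le_of_lt hx htmem.1, lt_of_le_of_ne (htmem.2.trans hy) hne⟩)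
    have hcong : ∫ t in x..y, D t = ∫ t in x..y, G t :=
      intervalIntegral.integral_congr_ae hae
    have hGlb : ∫ t in x..y, G t ≥ ∫ t in x..y, -(M * (w t)^2) := by
      apply intervalIntegral.integral_mono_on hxy
        ((continuous_const.mul (hwc.pow 2)).neg.intervalIntegrable _ _)
        (hGc.intervalIntegrable _ _)
      intro t ht
      have h1 := abs_le.1 (hM t ⟨le_trans hx ht.1, le_trans ht.2 hy⟩)
      simp only [hGdef]
      show -(M * (w t)^2) ≤ (deriv w t - s * (deriv m t * w t)) ^ 2 + (c t - lam) * w t ^ 2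
      nlinarith [sq_nonneg (deriv w t - s * (deriv m t * w t)), sq_nonneg (w t)]
    have hsub : ∫ t in x..y, (w t)^2 ≤ 1 := by
      rw [← hnorm]
      have e1 : (∫ t in (0:ℝ)..x, (w t)^2) + (∫ t in x..y, (w t)^2) = ∫ t in (0:ℝ)..y, (w t)^2 :=
        intervalIntegral.integral_add_adjacent_intervals (hw2int _ _) (hw2int _ _)
      have e2 : (∫ t in (0:ℝ)..y, (w t)^2) + (∫ t in y..1, (w t)^2) = ∫ t in (0:ℝ)..1, (w t)^2 :=
        intervalIntegral.integral_add_adjacent_intervals (hw2int _ _) (hw2int _ _)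
      have p1 : 0 ≤ ∫ t in (0:ℝ)..x, (w t)^2 :=
        intervalIntegral.integral_nonneg hx (fun t _ => sq_nonneg _)
      have p2 : 0 ≤ ∫ t in y..1, (w t)^2 :=
        intervalIntegral.integral_nonneg hy (fun t _ => sq_nonneg _)
      linarith
    have : ∫ t in x..y, -(M * (w t)^2) ≥ -M := by
      rw [intervalIntegral.integral_neg, intervalIntegral.integral_const_mul]
      have hpos : 0 ≤ ∫ t in x..y, (w t)^2 :=
        intervalIntegral.integral_nonneg hxy (fun t _ => sq_nonneg _)
      nlinarith
    linarith [hfund, hcong, hGlb, this]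
  intro x hx
  have h1 := key x 1 hx.1 hx.2 le_rfl
  have h2 := key 0 x le_rfl hx.1 hx.2
  rw [hJ1] at h1; rw [hJ0] at h2
  simp only [hJdef] at h1 h2
  rw [abs_le]
  constructor <;> [linarith; linarith]

lemma interval_bound_mono
    (s M : ℝ) (hMnn : 0 ≤ M) (hs : 0 < s) (w m : ℝ → ℝ)
    (hw2 : ContDiff ℝ 2 w) (hm : ContDiff ℝ 2 m)
    (hJb : ∀ t ∈ Set.Icc (0:ℝ) 1, |w t * deriv w t - s * (deriv m t * (w t) ^ 2)| ≤ M)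
    (hnorm : (∫ x in (0:ℝ)..1, (w x) ^ 2) = 1)
    (a₁ a₂ α β γ δ η d₂ : ℝ)
    (h0a : 0 ≤ a₁) (haα : a₁ ≤ α) (hαβ : α < β) (hβγ : β < γ) (hγδ : γ < δ)
    (hδ : δ ≤ a₂) (ha₂ : a₂ ≤ 1) (hη : 0 < η) (hηγ : η ≤ γ - β)
    (hmono : MonotoneOn m (Set.Icc a₁ a₂))
    (hd₂ : ∀ x ∈ Set.Icc α β, d₂ ≤ m (x + η) - m x) :
    ∀ x ∈ Set.Icc α β, (w x) ^ 2 ≤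
      Real.exp (-(2 * s * (m γ - m β))) / (δ - γ)
        + 2 * M * (η + Real.exp (-(2 * s * d₂))) := by
  have hw2' : ContDiff ℝ ((1:ℕ)+1) w := by exact_mod_cast hw2
  rw [contDiff_succ_iff_deriv] at hw2'
  have hwd : Differentiable ℝ w := hw2'.1
  have hwc : Continuous w := hwd.continuous
  have hw'c : Continuous (deriv w) := hw2'.2.2.continuous
  have hm2' : ContDiff ℝ ((1:ℕ)+1) m := by exact_mod_cast hm
  rw [contDiff_succ_iff_deriv] at hm2'
  have hmd : Differentiable ℝ m := hm2'.1
  have hmc : Continuous m := hmd.continuous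
  have hm'c : Continuous (deriv m) := hm2'.2.2.continuous
  have hEc : Continuous (fun t => Real.exp (-(2 * s * m t))) :=
    Real.continuous_exp.comp (continuous_const.mul hmc).neg
  have hEpos : ∀ t, 0 < Real.exp (-(2 * s * m t)) := fun t => Real.exp_pos _
  -- the minimiser on [γ, δ]
  obtain ⟨y, hymem, hymin⟩ :=
    (isCompact_Icc : IsCompact (Set.Icc γ δ)).exists_isMinOn
      (Set.nonempty_Icc.2 hγδ.le) (hwc.pow 2).continuousOn
  have hymin' : ∀ t ∈ Set.Icc γ δ, (w y) ^ 2 ≤ (w t) ^ 2 := fun t ht => hymin ht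
  have hw2int : ∀ u v : ℝ, IntervalIntegrable (fun t => (w t) ^ 2) volume u v :=
    fun u v => (hwc.pow 2).intervalIntegrable _ _
  have hybound : (w y) ^ 2 ≤ 1 / (δ - γ) := by
    have h1 : (δ - γ) * (w y) ^ 2 ≤ ∫ t in γ..δ, (w t) ^ 2 := by
      have : (∫ _ in γ..δ, (w y) ^ 2) ≤ ∫ t in γ..δ, (w t) ^ 2 :=
        intervalIntegral.integral_mono_on hγδ.le
          (intervalIntegrable_const) (hw2int _ _) hymin'
      simpa [smul_eq_mul, mul_comm] using this
    have h2 : (∫ t in γ..δ, (w t) ^ 2) ≤ 1 := by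
      rw [← hnorm]
      have e1 : (∫ t in (0:ℝ)..γ, (w t)^2) + (∫ t in γ..δ, (w t)^2) = ∫ t in (0:ℝ)..δ, (w t)^2 :=
        intervalIntegral.integral_add_adjacent_intervals (hw2int _ _) (hw2int _ _)
      have e2 : (∫ t in (0:ℝ)..δ, (w t)^2) + (∫ t in δ..1, (w t)^2) = ∫ t in (0:ℝ)..1, (w t)^2 :=
        intervalIntegral.integral_add_adjacent_intervals (hw2int _ _) (hw2int _ _)
      have p1 : 0 ≤ ∫ t in (0:ℝ)..γ, (w t)^2 :=
        intervalIntegral.integral_nonneg (by linarith) (fun t _ => sq_nonneg _)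
      have p2 : 0 ≤ ∫ t in δ..1, (w t)^2 :=
        intervalIntegral.integral_nonneg (by linarith) (fun t _ => sq_nonneg _)
      linarith
    have hpos : (0:ℝ) < δ - γ := by linarith
    rw [le_div_iff₀ hpos]
    nlinarith
  -- the derivative of g
  set g : ℝ → ℝ := fun t => Real.exp (-(2 * s * m t)) * (w t) ^ 2 with hgdef
  have hg : ∀ t, HasDerivAt g
      (2 * Real.exp (-(2 * s * m t)) * (w t * deriv w t - s * (deriv m t * (w t) ^ 2))) t := by
    intro t
    have h1 : HasDerivAt (fun t => -(2 * s * m t)) (-(2 * s * deriv m t)) t :=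
      (((hmd t).hasDerivAt.const_mul (2*s)).neg)
    have h2 : HasDerivAt (fun t => Real.exp (-(2 * s * m t)))
        (Real.exp (-(2 * s * m t)) * (-(2 * s * deriv m t))) t := h1.exp
    have h3 : HasDerivAt (fun t => (w t) ^ 2) (2 * w t * deriv w t) t := by
      have : HasDerivAt (fun t => w t ^ 2) _ t := (hwd t).hasDerivAt.pow 2
      simpa [mul_comm, mul_assoc, mul_left_comm] using this
    have : HasDerivAt (fun t => Real.exp (-(2 * s * m t)) * (w t) ^ 2) _ t := h2.mul h3
    convert this using 1
    ring
  intro x hx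
  have hxy : x ≤ y := le_trans hx.2 (le_trans hβγ.le hymem.1)
  have hx0 : 0 ≤ x := le_trans h0a (le_trans haα hx.1)
  have hy1 : y ≤ 1 := le_trans hymem.2 (le_trans hδ ha₂)
  -- integral identity for g
  have hfund : ∫ t in x..y,
      2 * Real.exp (-(2 * s * m t)) * (w t * deriv w t - s * (deriv m t * (w t) ^ 2))
      = g y - g x :=
    intervalIntegral.integral_eq_sub_of_hasDerivAt (fun t _ => hg t)
      (((continuous_const.mul hEc).mul
        ((hwc.mul hw'c).sub (continuous_const.mul (hm'c.mul (hwc.pow 2))))).intervalIntegrable _ _)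
  have hglb : g y - g x ≥ -(2 * M) * ∫ t in x..y, Real.exp (-(2 * s * m t)) := by
    rw [← hfund, ← intervalIntegral.integral_const_mul]
    apply intervalIntegral.integral_mono_on hxy
      ((continuous_const.mul hEc).intervalIntegrable _ _)
      (((continuous_const.mul hEc).mul
        ((hwc.mul hw'c).sub (continuous_const.mul (hm'c.mul (hwc.pow 2))))).intervalIntegrable _ _)
    intro t ht
    have hJt := abs_le.1 (hJb t ⟨le_trans hx0 ht.1, le_trans ht.2 hy1⟩)
    have := hEpos t
    show -(2 * M) * Real.exp (-(2 * s * m t))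
      ≤ 2 * Real.exp (-(2 * s * m t)) * (w t * deriv w t - s * (deriv m t * (w t) ^ 2))
    nlinarith
  -- so : w x ^ 2 ≤ exp(2 s m x) * g y + 2 M * ∫ exp(2 s (m x - m t))
  have hgx : (w x) ^ 2 = Real.exp (2 * s * m x) * g x := by
    simp only [hgdef, ← mul_assoc, ← Real.exp_add]
    simp
  have step1 : (w x) ^ 2 ≤ Real.exp (2 * s * m x) * g y
      + 2 * M * ∫ t in x..y, Real.exp (2 * s * m x) * Real.exp (-(2 * s * m t)) := by
    rw [hgx, intervalIntegral.integral_const_mul]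
    have hE2 := Real.exp_pos (2 * s * m x)
    nlinarith [hglb]
  -- term 1
  have hmemβ : β ∈ Set.Icc a₁ a₂ := ⟨by linarith, by linarith⟩
  have hmemγ : γ ∈ Set.Icc a₁ a₂ := ⟨by linarith, by linarith⟩
  have hmemx : x ∈ Set.Icc a₁ a₂ := ⟨by linarith [hx.1], by linarith [hx.2]⟩
  have hmemy : y ∈ Set.Icc a₁ a₂ := ⟨by linarith [hymem.1], by linarith [hymem.2]⟩
  have hterm1 : Real.exp (2 * s * m x) * g y ≤ Real.exp (-(2 * s * (m γ - m β))) / (δ - γ) := by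
    have hgy : Real.exp (2 * s * m x) * g y
        = Real.exp (2 * s * m x - 2 * s * m y) * (w y) ^ 2 := by
      simp only [hgdef, ← mul_assoc, ← Real.exp_add]
      ring_nf
    rw [hgy]
    have h1 : m x ≤ m β := hmono hmemx hmemβ hx.2
    have h2 : m γ ≤ m y := hmono hmemγ hmemy hymem.1
    have h3 : Real.exp (2 * s * m x - 2 * s * m y) ≤ Real.exp (-(2 * s * (m γ - m β))) :=
      Real.exp_le_exp.2 (by nlinarith)
    calc Real.exp (2 * s * m x - 2 * s * m y) * (w y) ^ 2
        ≤ Real.exp (-(2 * s * (m γ - m β))) * (1 / (δ - γ)) := by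
          apply mul_le_mul h3 hybound (sq_nonneg _) (le_of_lt (Real.exp_pos _))
      _ = Real.exp (-(2 * s * (m γ - m β))) / (δ - γ) := by ring
  -- term 2
  have hterm2 : (∫ t in x..y, Real.exp (2 * s * m x) * Real.exp (-(2 * s * m t)))
      ≤ η + Real.exp (-(2 * s * d₂)) := by
    have hxηy : x + η ≤ y := by
      have : x + η ≤ β + (γ - β) := by have := hx.2; linarith
      linarith [hymem.1]
    have hEint : ∀ u v : ℝ, IntervalIntegrable
        (fun t => Real.exp (2 * s * m x) * Real.exp (-(2 * s * m t))) volume u v :=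
      fun u v => (continuous_const.mul hEc).intervalIntegrable _ _
    have hsplit : (∫ t in x..y, Real.exp (2 * s * m x) * Real.exp (-(2 * s * m t)))
        = (∫ t in x..(x+η), Real.exp (2 * s * m x) * Real.exp (-(2 * s * m t)))
          + ∫ t in (x+η)..y, Real.exp (2 * s * m x) * Real.exp (-(2 * s * m t)) :=
      (intervalIntegral.integral_add_adjacent_intervals (hEint _ _) (hEint _ _)).symm
    have hpart1 : (∫ t in x..(x+η), Real.exp (2 * s * m x) * Real.exp (-(2 * s * m t))) ≤ η := by
      have : (∫ t in x..(x+η), Real.exp (2 * s * m x) * Real.exp (-(2 * s * m t)))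
          ≤ ∫ _ in x..(x+η), (1:ℝ) := by
        apply intervalIntegral.integral_mono_on (by linarith) (hEint _ _)
          intervalIntegrable_const
        intro t ht
        have htmem : t ∈ Set.Icc a₁ a₂ := ⟨by linarith [ht.1, hx.1],
          by linarith [ht.2, hx.2, hηγ, hβγ, hγδ, hδ]⟩
        have h1 : m x ≤ m t := hmono hmemx htmem ht.1
        rw [← Real.exp_add]
        have : 2 * s * m x + -(2 * s * m t) ≤ 0 := by nlinarith
        calc Real.exp (2 * s * m x + -(2 * s * m t)) ≤ Real.exp 0 := Real.exp_le_exp.2 this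
          _ = 1 := Real.exp_zero
      simpa using this
    have hpart2 : (∫ t in (x+η)..y, Real.exp (2 * s * m x) * Real.exp (-(2 * s * m t)))
        ≤ Real.exp (-(2 * s * d₂)) := by
      have hb : (∫ t in (x+η)..y, Real.exp (2 * s * m x) * Real.exp (-(2 * s * m t)))
          ≤ ∫ _ in (x+η)..y, Real.exp (-(2 * s * d₂)) := by
        apply intervalIntegral.integral_mono_on hxηy (hEint _ _) intervalIntegrable_const
        intro t ht
        have htmem : t ∈ Set.Icc a₁ a₂ := ⟨by linarith [ht.1, hx.1], by linarith [ht.2, hymem.2]⟩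
        have hxηmem : x + η ∈ Set.Icc a₁ a₂ := ⟨by linarith [hx.1],
          by linarith [hx.2, hηγ, hβγ, hγδ, hδ]⟩
        have h1 : m (x + η) ≤ m t := hmono hxηmem htmem ht.1
        have h2 : d₂ ≤ m (x + η) - m x := hd₂ x hx
        rw [← Real.exp_add]
        exact Real.exp_le_exp.2 (by nlinarith)
      have hlen : y - (x + η) ≤ 1 := by linarith [hx0, hη, hy1]
      have := Real.exp_pos (-(2 * s * d₂))
      calc (∫ t in (x+η)..y, Real.exp (2 * s * m x) * Real.exp (-(2 * s * m t)))
          ≤ (y - (x + η)) * Real.exp (-(2 * s * d₂)) := by simpa [smul_eq_mul] using hb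
        _ ≤ 1 * Real.exp (-(2 * s * d₂)) := by nlinarith
        _ = Real.exp (-(2 * s * d₂)) := one_mul _
    linarith [hsplit, hpart1, hpart2]
  have h2M : (0:ℝ) ≤ 2 * M := by linarith
  calc (w x) ^ 2 ≤ Real.exp (2 * s * m x) * g y
      + 2 * M * ∫ t in x..y, Real.exp (2 * s * m x) * Real.exp (-(2 * s * m t)) := step1
    _ ≤ Real.exp (-(2 * s * (m γ - m β))) / (δ - γ)
        + 2 * M * (η + Real.exp (-(2 * s * d₂))) := by
        have := mul_le_mul_of_nonneg_left hterm2 h2M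
        linarith [hterm1]

lemma interval_bound_anti
    (s M : ℝ) (hMnn : 0 ≤ M) (hs : 0 < s) (w m : ℝ → ℝ)
    (hw2 : ContDiff ℝ 2 w) (hm : ContDiff ℝ 2 m)
    (hJb : ∀ t ∈ Set.Icc (0:ℝ) 1, |w t * deriv w t - s * (deriv m t * (w t) ^ 2)| ≤ M)
    (hnorm : (∫ x in (0:ℝ)..1, (w x) ^ 2) = 1)
    (a₁ a₂ α β γ δ η d₂ : ℝ)
    (h0a : 0 ≤ a₁) (haγ : a₁ ≤ γ) (hγδ : γ < δ) (hδα : δ < α) (hαβ : α < β)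
    (hβ : β ≤ a₂) (ha₂ : a₂ ≤ 1) (hη : 0 < η) (hηγ : η ≤ α - δ)
    (hmono : AntitoneOn m (Set.Icc a₁ a₂))
    (hd₂ : ∀ x ∈ Set.Icc α β, d₂ ≤ m (x - η) - m x) :
    ∀ x ∈ Set.Icc α β, (w x) ^ 2 ≤
      Real.exp (-(2 * s * (m δ - m α))) / (δ - γ)
        + 2 * M * (η + Real.exp (-(2 * s * d₂))) := by
  have hw2' : ContDiff ℝ ((1:ℕ)+1) w := by exact_mod_cast hw2
  rw [contDiff_succ_iff_deriv] at hw2'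
  have hwd : Differentiable ℝ w := hw2'.1
  have hwc : Continuous w := hwd.continuous
  have hw'c : Continuous (deriv w) := hw2'.2.2.continuous
  have hm2' : ContDiff ℝ ((1:ℕ)+1) m := by exact_mod_cast hm
  rw [contDiff_succ_iff_deriv] at hm2'
  have hmd : Differentiable ℝ m := hm2'.1
  have hmc : Continuous m := hmd.continuous
  have hm'c : Continuous (deriv m) := hm2'.2.2.continuous
  have hEc : Continuous (fun t => Real.exp (-(2 * s * m t))) :=
    Real.continuous_exp.comp (continuous_const.mul hmc).neg
  have hEpos : ∀ t, 0 < Real.exp (-(2 * s * m t)) := fun t => Real.exp_pos _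
  obtain ⟨y, hymem, hymin⟩ :=
    (isCompact_Icc : IsCompact (Set.Icc γ δ)).exists_isMinOn
      (Set.nonempty_Icc.2 hγδ.le) (hwc.pow 2).continuousOn
  have hymin' : ∀ t ∈ Set.Icc γ δ, (w y) ^ 2 ≤ (w t) ^ 2 := fun t ht => hymin ht
  have hw2int : ∀ u v : ℝ, IntervalIntegrable (fun t => (w t) ^ 2) volume u v :=
    fun u v => (hwc.pow 2).intervalIntegrable _ _
  have hybound : (w y) ^ 2 ≤ 1 / (δ - γ) := by
    have h1 : (δ - γ) * (w y) ^ 2 ≤ ∫ t in γ..δ, (w t) ^ 2 := by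
      have : (∫ _ in γ..δ, (w y) ^ 2) ≤ ∫ t in γ..δ, (w t) ^ 2 :=
        intervalIntegral.integral_mono_on hγδ.le
          (intervalIntegrable_const) (hw2int _ _) hymin'
      simpa [smul_eq_mul, mul_comm] using this
    have h2 : (∫ t in γ..δ, (w t) ^ 2) ≤ 1 := by
      rw [← hnorm]
      have e1 : (∫ t in (0:ℝ)..γ, (w t)^2) + (∫ t in γ..δ, (w t)^2) = ∫ t in (0:ℝ)..δ, (w t)^2 :=
        intervalIntegral.integral_add_adjacent_intervals (hw2int _ _) (hw2int _ _)
      have e2 : (∫ t in (0:ℝ)..δ, (w t)^2) + (∫ t in δ..1, (w t)^2) = ∫ t in (0:ℝ)..1, (w t)^2 :=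
        intervalIntegral.integral_add_adjacent_intervals (hw2int _ _) (hw2int _ _)
      have p1 : 0 ≤ ∫ t in (0:ℝ)..γ, (w t)^2 :=
        intervalIntegral.integral_nonneg (by linarith) (fun t _ => sq_nonneg _)
      have p2 : 0 ≤ ∫ t in δ..1, (w t)^2 :=
        intervalIntegral.integral_nonneg (by linarith) (fun t _ => sq_nonneg _)
      linarith
    have hpos : (0:ℝ) < δ - γ := by linarith
    rw [le_div_iff₀ hpos]
    nlinarith
  set g : ℝ → ℝ := fun t => Real.exp (-(2 * s * m t)) * (w t) ^ 2 with hgdef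
  have hg : ∀ t, HasDerivAt g
      (2 * Real.exp (-(2 * s * m t)) * (w t * deriv w t - s * (deriv m t * (w t) ^ 2))) t := by
    intro t
    have h1 : HasDerivAt (fun t => -(2 * s * m t)) (-(2 * s * deriv m t)) t :=
      (((hmd t).hasDerivAt.const_mul (2*s)).neg)
    have h2 : HasDerivAt (fun t => Real.exp (-(2 * s * m t)))
        (Real.exp (-(2 * s * m t)) * (-(2 * s * deriv m t))) t := h1.exp
    have h3 : HasDerivAt (fun t => (w t) ^ 2) (2 * w t * deriv w t) t := by
      have : HasDerivAt (fun t => w t ^ 2) _ t := (hwd t).hasDerivAt.pow 2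
      simpa [mul_comm, mul_assoc, mul_left_comm] using this
    have : HasDerivAt (fun t => Real.exp (-(2 * s * m t)) * (w t) ^ 2) _ t := h2.mul h3
    convert this using 1
    ring
  intro x hx
  have hyx : y ≤ x := le_trans hymem.2 (le_trans hδα.le hx.1)
  have hy0 : 0 ≤ y := le_trans (le_trans h0a haγ) hymem.1
  have hx1 : x ≤ 1 := le_trans hx.2 (le_trans hβ ha₂)
  have hfund : ∫ t in y..x,
      2 * Real.exp (-(2 * s * m t)) * (w t * deriv w t - s * (deriv m t * (w t) ^ 2))
      = g x - g y :=
    intervalIntegral.integral_eq_sub_of_hasDerivAt (fun t _ => hg t)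
      (((continuous_const.mul hEc).mul
        ((hwc.mul hw'c).sub (continuous_const.mul (hm'c.mul (hwc.pow 2))))).intervalIntegrable _ _)
  have hgub : g x - g y ≤ (2 * M) * ∫ t in y..x, Real.exp (-(2 * s * m t)) := by
    rw [← hfund, ← intervalIntegral.integral_const_mul]
    apply intervalIntegral.integral_mono_on hyx
      (((continuous_const.mul hEc).mul
        ((hwc.mul hw'c).sub (continuous_const.mul (hm'c.mul (hwc.pow 2))))).intervalIntegrable _ _)
      ((continuous_const.mul hEc).intervalIntegrable _ _)
    intro t ht
    have hJt := abs_le.1 (hJb t ⟨le_trans hy0 ht.1, le_trans ht.2 hx1⟩)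
    have := hEpos t
    show 2 * Real.exp (-(2 * s * m t)) * (w t * deriv w t - s * (deriv m t * (w t) ^ 2))
      ≤ 2 * M * Real.exp (-(2 * s * m t))
    nlinarith
  have hgx : (w x) ^ 2 = Real.exp (2 * s * m x) * g x := by
    simp only [hgdef, ← mul_assoc, ← Real.exp_add]
    simp
  have step1 : (w x) ^ 2 ≤ Real.exp (2 * s * m x) * g y
      + 2 * M * ∫ t in y..x, Real.exp (2 * s * m x) * Real.exp (-(2 * s * m t)) := by
    rw [hgx, intervalIntegral.integral_const_mul]
    have hE2 := Real.exp_pos (2 * s * m x)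
    nlinarith [hgub]
  have hmemα : α ∈ Set.Icc a₁ a₂ := ⟨by linarith, by linarith⟩
  have hmemδ : δ ∈ Set.Icc a₁ a₂ := ⟨by linarith, by linarith⟩
  have hmemx : x ∈ Set.Icc a₁ a₂ := ⟨by linarith [hx.1], by linarith [hx.2]⟩
  have hmemy : y ∈ Set.Icc a₁ a₂ := ⟨by linarith [hymem.1], by linarith [hymem.2]⟩
  have hterm1 : Real.exp (2 * s * m x) * g y ≤ Real.exp (-(2 * s * (m δ - m α))) / (δ - γ) := by
    have hgy : Real.exp (2 * s * m x) * g y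
        = Real.exp (2 * s * m x - 2 * s * m y) * (w y) ^ 2 := by
      simp only [hgdef, ← mul_assoc, ← Real.exp_add]
      ring_nf
    rw [hgy]
    have h1 : m x ≤ m α := hmono hmemα hmemx hx.1
    have h2 : m δ ≤ m y := hmono hmemy hmemδ hymem.2
    have h3 : Real.exp (2 * s * m x - 2 * s * m y) ≤ Real.exp (-(2 * s * (m δ - m α))) :=
      Real.exp_le_exp.2 (by nlinarith)
    calc Real.exp (2 * s * m x - 2 * s * m y) * (w y) ^ 2
        ≤ Real.exp (-(2 * s * (m δ - m α))) * (1 / (δ - γ)) := by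
          apply mul_le_mul h3 hybound (sq_nonneg _) (le_of_lt (Real.exp_pos _))
      _ = Real.exp (-(2 * s * (m δ - m α))) / (δ - γ) := by ring
  have hterm2 : (∫ t in y..x, Real.exp (2 * s * m x) * Real.exp (-(2 * s * m t)))
      ≤ η + Real.exp (-(2 * s * d₂)) := by
    have hyxη : y ≤ x - η := by
      have := hx.1; have := hymem.2; linarith
    have hEint : ∀ u v : ℝ, IntervalIntegrable
        (fun t => Real.exp (2 * s * m x) * Real.exp (-(2 * s * m t))) volume u v :=
      fun u v => (continuous_const.mul hEc).intervalIntegrable _ _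
    have hsplit : (∫ t in y..x, Real.exp (2 * s * m x) * Real.exp (-(2 * s * m t)))
        = (∫ t in y..(x-η), Real.exp (2 * s * m x) * Real.exp (-(2 * s * m t)))
          + ∫ t in (x-η)..x, Real.exp (2 * s * m x) * Real.exp (-(2 * s * m t)) :=
      (intervalIntegral.integral_add_adjacent_intervals (hEint _ _) (hEint _ _)).symm
    have hpart1 : (∫ t in (x-η)..x, Real.exp (2 * s * m x) * Real.exp (-(2 * s * m t))) ≤ η := by
      have : (∫ t in (x-η)..x, Real.exp (2 * s * m x) * Real.exp (-(2 * s * m t)))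
          ≤ ∫ _ in (x-η)..x, (1:ℝ) := by
        apply intervalIntegral.integral_mono_on (by linarith) (hEint _ _)
          intervalIntegrable_const
        intro t ht
        have htmem : t ∈ Set.Icc a₁ a₂ := ⟨by linarith [ht.1, hx.1, hηγ, hγδ],
          by linarith [ht.2, hx.2]⟩
        have h1 : m x ≤ m t := hmono htmem hmemx ht.2
        rw [← Real.exp_add]
        have : 2 * s * m x + -(2 * s * m t) ≤ 0 := by nlinarith
        calc Real.exp (2 * s * m x + -(2 * s * m t)) ≤ Real.exp 0 := Real.exp_le_exp.2 this
          _ = 1 := Real.exp_zero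
      simpa using this
    have hpart2 : (∫ t in y..(x-η), Real.exp (2 * s * m x) * Real.exp (-(2 * s * m t)))
        ≤ Real.exp (-(2 * s * d₂)) := by
      have hb : (∫ t in y..(x-η), Real.exp (2 * s * m x) * Real.exp (-(2 * s * m t)))
          ≤ ∫ _ in y..(x-η), Real.exp (-(2 * s * d₂)) := by
        apply intervalIntegral.integral_mono_on hyxη (hEint _ _) intervalIntegrable_const
        intro t ht
        have htmem : t ∈ Set.Icc a₁ a₂ := ⟨by linarith [ht.1, hymem.1], by
          have := ht.2; have := hx.2; have := hη; linarith⟩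
        have hxηmem : x - η ∈ Set.Icc a₁ a₂ := ⟨by linarith [hx.1, hηγ, hγδ],
          by linarith [hx.2, hη]⟩
        have h1 : m (x - η) ≤ m t := hmono htmem hxηmem ht.2
        have h2 : d₂ ≤ m (x - η) - m x := hd₂ x hx
        rw [← Real.exp_add]
        exact Real.exp_le_exp.2 (by nlinarith)
      have hlen : (x - η) - y ≤ 1 := by linarith [hy0, hη, hx1]
      have := Real.exp_pos (-(2 * s * d₂))
      calc (∫ t in y..(x-η), Real.exp (2 * s * m x) * Real.exp (-(2 * s * m t)))
          ≤ ((x - η) - y) * Real.exp (-(2 * s * d₂)) := by simpa [smul_eq_mul] using hb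
        _ ≤ 1 * Real.exp (-(2 * s * d₂)) := by nlinarith [hyxη]
        _ = Real.exp (-(2 * s * d₂)) := one_mul _
    linarith [hsplit, hpart1, hpart2]
  have h2M : (0:ℝ) ≤ 2 * M := by linarith
  calc (w x) ^ 2 ≤ Real.exp (2 * s * m x) * g y
      + 2 * M * ∫ t in y..x, Real.exp (2 * s * m x) * Real.exp (-(2 * s * m t)) := step1
    _ ≤ Real.exp (-(2 * s * (m δ - m α))) / (δ - γ)
        + 2 * M * (η + Real.exp (-(2 * s * d₂))) := by
        have := mul_le_mul_of_nonneg_left hterm2 h2M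
        linarith [hterm1]

lemma zeta_exists (α α' β' β : ℝ) (h1 : α < α') (h2 : α' ≤ β') (h3 : β' < β) :
    ∃ ζ : ℝ → ℝ, Continuous ζ ∧ (∀ x, 0 ≤ ζ x) ∧ (∀ x, ζ x ≤ 1) ∧
      (∀ x ∈ Set.Icc α' β', ζ x = 1) ∧ (∀ x, x ≤ α ∨ β ≤ x → ζ x = 0) := by
  refine ⟨fun x => max 0 (min ((x - α)/(α' - α)) (min 1 ((β - x)/(β - β')))), ?_, ?_, ?_, ?_, ?_⟩
  · apply Continuous.max continuous_const
    apply Continuous.min ((continuous_id.sub continuous_const).div_const _)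
    exact Continuous.min continuous_const ((continuous_const.sub continuous_id).div_const _)
  · intro x; exact le_max_left _ _
  · intro x
    apply max_le (by norm_num)
    exact le_trans (min_le_right _ _) (min_le_left _ _)
  · intro x hx
    have hr1 : (1:ℝ) ≤ (x - α)/(α' - α) := by
      rw [le_div_iff₀ (by linarith)]; linarith [hx.1]
    have hr2 : (1:ℝ) ≤ (β - x)/(β - β') := by
      rw [le_div_iff₀ (by linarith)]; linarith [hx.2]
    show (0:ℝ) ⊔ ((x - α)/(α' - α) ⊓ ((1:ℝ) ⊓ (β - x)/(β - β'))) = 1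
    rw [min_eq_left hr2, min_eq_right hr1]
    exact max_eq_right zero_le_one
  · intro x hx
    rcases hx with hx | hx
    · have : (x - α)/(α' - α) ≤ 0 := div_nonpos_of_nonpos_of_nonneg (by linarith) (by linarith)
      exact max_eq_left (le_trans (min_le_left _ _) this)
    · have : (β - x)/(β - β') ≤ 0 := div_nonpos_of_nonpos_of_nonneg (by linarith) (by linarith)
      exact max_eq_left (le_trans (le_trans (min_le_right _ _) (min_le_right _ _)) this)

lemma weighted_integral_le (w ζ : ℝ → ℝ) (α β B : ℝ) (hwc : Continuous w) (hζc : Continuous ζ)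
    (hζ0' : ∀ x, 0 ≤ ζ x) (hζ1' : ∀ x, ζ x ≤ 1)
    (hζ0 : ∀ x, x ≤ α ∨ β ≤ x → ζ x = 0)
    (h0α : 0 ≤ α) (hαβ : α ≤ β) (hβ1 : β ≤ 1)
    (hB : ∀ x ∈ Set.Icc α β, (w x) ^ 2 ≤ B) :
    (∫ x in (0:ℝ)..1, (w x) ^ 2 * ζ x) ≤ (β - α) * B := by
  have hint : ∀ u v : ℝ, IntervalIntegrable (fun x => (w x)^2 * ζ x) volume u v :=
    fun u v => ((hwc.pow 2).mul hζc).intervalIntegrable _ _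
  have e1 : (∫ x in (0:ℝ)..α, (w x)^2 * ζ x) + (∫ x in α..β, (w x)^2 * ζ x)
      = ∫ x in (0:ℝ)..β, (w x)^2 * ζ x :=
    intervalIntegral.integral_add_adjacent_intervals (hint _ _) (hint _ _)
  have e2 : (∫ x in (0:ℝ)..β, (w x)^2 * ζ x) + (∫ x in β..1, (w x)^2 * ζ x)
      = ∫ x in (0:ℝ)..1, (w x)^2 * ζ x :=
    intervalIntegral.integral_add_adjacent_intervals (hint _ _) (hint _ _)
  have z1 : (∫ x in (0:ℝ)..α, (w x)^2 * ζ x) = 0 := by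
    have hcg : (∫ x in (0:ℝ)..α, (w x)^2 * ζ x) = ∫ _ in (0:ℝ)..α, (0:ℝ) := by
      apply intervalIntegral.integral_congr
      intro t ht
      rw [Set.uIcc_of_le h0α] at ht
      show (w t)^2 * ζ t = 0
      rw [hζ0 t (Or.inl ht.2)]; ring
    rw [hcg]; simp
  have z2 : (∫ x in β..1, (w x)^2 * ζ x) = 0 := by
    have hcg : (∫ x in β..(1:ℝ), (w x)^2 * ζ x) = ∫ _ in β..(1:ℝ), (0:ℝ) := by
      apply intervalIntegral.integral_congr
      intro t ht
      rw [Set.uIcc_of_le hβ1] at ht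
      show (w t)^2 * ζ t = 0
      rw [hζ0 t (Or.inr ht.1)]; ring
    rw [hcg]; simp
  have hmid : (∫ x in α..β, (w x)^2 * ζ x) ≤ (β - α) * B := by
    have h := intervalIntegral.integral_mono_on hαβ (hint α β)
      (intervalIntegrable_const (c := B)) ?_
    · rw [intervalIntegral.integral_const, smul_eq_mul] at h
      exact h
    · intro x hx
      have h1 := hB x hx
      have h2 := hζ0' x
      have h3 := hζ1' x
      nlinarith [sq_nonneg (w x)]
  linarith [e1, e2, z1, z2, hmid]

lemma measure_icc_le (μ : Measure ℝ) [IsProbabilityMeasure μ]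
    (hμsupp : μ (Set.Icc (0:ℝ) 1)ᶜ = 0)
    (ζ : ℝ → ℝ) (α α' β' β : ℝ) (hζc : Continuous ζ)
    (hζ0' : ∀ x, 0 ≤ ζ x) (hζ1ael : ∀ x ∈ Set.Icc α' β', ζ x = 1)
    (hζ0 : ∀ x, x ≤ α ∨ β ≤ x → ζ x = 0) :
    (μ (Set.Icc α' β')).toReal ≤ ∫ x in Set.Icc (0:ℝ) 1, ζ x ∂μ := by
  have hsupp : HasCompactSupport ζ := by
    apply HasCompactSupport.intro (isCompact_Icc : IsCompact (Set.Icc α β))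
    intro x hx
    rcases not_and_or.1 hx with h | h
    · exact hζ0 x (Or.inl (le_of_lt (not_le.1 h)))
    · exact hζ0 x (Or.inr (le_of_lt (not_le.1 h)))
  have hint : Integrable ζ μ := hζc.integrable_of_hasCompactSupport hsupp
  have h1 : (μ (Set.Icc α' β')).toReal = ∫ _ in Set.Icc α' β', (1:ℝ) ∂μ := by
    rw [setIntegral_const]; simp; rfl
  have h2 : (∫ _ in Set.Icc α' β', (1:ℝ) ∂μ) = ∫ x in Set.Icc α' β', ζ x ∂μ :=
    setIntegral_congr_fun measurableSet_Icc (fun x hx => (hζ1ael x hx).symm)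
  have h3 : (∫ x in Set.Icc α' β', ζ x ∂μ) ≤ ∫ x, ζ x ∂μ :=
    setIntegral_le_integral hint (Filter.Eventually.of_forall hζ0')
  have h4 : (∫ x, ζ x ∂μ) = ∫ x in Set.Icc (0:ℝ) 1, ζ x ∂μ := by
    have h0 : (∫ x in (Set.Icc (0:ℝ) 1)ᶜ, ζ x ∂μ) = 0 := by
      rw [Measure.restrict_eq_zero.2 hμsupp]
      exact integral_zero_measure _
    rw [← integral_add_compl (measurableSet_Icc : MeasurableSet (Set.Icc (0:ℝ) 1)) hint, h0,
      add_zero]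
  linarith [h1, h2, h3, h4]

/-- Lemma 2.4: if `m` is strictly monotone on `[a₁,a₂] ⊆ [0,1]`, then the weak
limit measure `μ` of the squared eigenfunctions gives no mass to `(a₁,a₂)`. -/
theorem measure_open_interval_zero_of_strictMono_or_strictAnti
    (m c : ℝ → ℝ) (hm : ContDiff ℝ 2 m) (hc : Continuous c)
    (w : ℝ → ℝ → ℝ)
    (hw : ∀ s > (0:ℝ), IsPrincipalEigenfunction m c (lambdaN m c s) s (w s))
    (μ : Measure ℝ) [IsProbabilityMeasure μ] (hμsupp : μ (Set.Icc (0:ℝ) 1)ᶜ = 0)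
    (sj : ℕ → ℝ) (hsjpos : ∀ j, 0 < sj j) (hsj : Tendsto sj atTop atTop)
    (hweak : ∀ ζ : ℝ → ℝ, Continuous ζ →
      Tendsto (fun j => ∫ x in (0:ℝ)..1, (w (sj j) x) ^ 2 * ζ x) atTop
        (nhds (∫ x in Set.Icc (0:ℝ) 1, ζ x ∂μ)))
    (a₁ a₂ : ℝ) (ha₁ : 0 ≤ a₁) (h12 : a₁ < a₂) (ha₂ : a₂ ≤ 1)
    (hmono : StrictMonoOn m (Set.Icc a₁ a₂) ∨ StrictAntiOn m (Set.Icc a₁ a₂)) :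
    μ (Set.Ioo a₁ a₂) = 0 := by
  have hmc : Continuous m := hm.continuous
  obtain ⟨xlo, hxlomem, hlo⟩ := (isCompact_Icc : IsCompact (Set.Icc (0:ℝ) 1)).exists_isMinOn
    ⟨0, by norm_num⟩ hc.continuousOn
  obtain ⟨xhi, hxhimem, hhi⟩ := (isCompact_Icc : IsCompact (Set.Icc (0:ℝ) 1)).exists_isMaxOn
    ⟨0, by norm_num⟩ hc.continuousOn
  set M : ℝ := c xhi - c xlo with hMdef
  have hMnn : 0 ≤ M := by
    have h1 : c xlo ≤ c xhi := hlo hxhimem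
    simp only [hMdef]; linarith
  have hMb : ∀ j : ℕ, ∀ x ∈ Set.Icc (0:ℝ) 1, |c x - lambdaN m c (sj j)| ≤ M := by
    intro j x hx
    obtain ⟨hge, hle⟩ := lambdaN_bounds m c hmc hc (sj j) (c xlo) (c xhi)
      (fun y hy => hlo hy) (fun y hy => hhi hy)
    have h1 : c xlo ≤ c x := hlo hx
    have h2 : c x ≤ c xhi := hhi hx
    rw [abs_le]; constructor <;> simp only [hMdef] <;> linarith
  have hwfacts : ∀ j : ℕ, ContDiff ℝ 2 (w (sj j)) ∧
      (∀ t ∈ Set.Icc (0:ℝ) 1,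
        |w (sj j) t * deriv (w (sj j)) t - sj j * (deriv m t * (w (sj j) t) ^ 2)| ≤ M) ∧
      (∫ x in (0:ℝ)..1, (w (sj j) x) ^ 2) = 1 := by
    intro j
    obtain ⟨hsm, hpos, hode, hb0, hb1, hnorm⟩ := hw (sj j) (hsjpos j)
    exact ⟨hsm, J_bound m c hm hc (sj j) (lambdaN m c (sj j)) M (w (sj j)) hsm hode hb0 hb1
      hnorm (hMb j), hnorm⟩
  have hexp : ∀ d : ℝ, 0 < d →
      Tendsto (fun j => Real.exp (-(2 * sj j * d))) atTop (nhds 0) := by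
    intro d hd
    have h1 : Tendsto (fun j => -(2 * d) * sj j) atTop atBot :=
      (tendsto_const_mul_atBot_of_neg (by linarith)).2 hsj
    have h2 : Tendsto (fun j => Real.exp (-(2 * d) * sj j)) atTop (nhds 0) :=
      Real.tendsto_exp_atBot.comp h1
    refine h2.congr fun j => ?_
    ring_nf
  have hIcc : ∀ α' β' : ℝ, a₁ < α' → β' < a₂ → μ (Set.Icc α' β') = 0 := by
    intro α' β' hα' hβ'
    rcases le_or_gt α' β' with hα'β' | hβ'α'
    swap
    · rw [Set.Icc_eq_empty (not_le.2 hβ'α')]; exact measure_empty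
    suffices hfin : (μ (Set.Icc α' β')).toReal ≤ 0 by
      have h0 : (μ (Set.Icc α' β')).toReal = 0 :=
        le_antisymm hfin ENNReal.toReal_nonneg
      exact ((ENNReal.toReal_eq_zero_iff _).1 h0).resolve_right (measure_ne_top μ _)
    rcases hmono with hmono | hanti
    · -- strictly increasing case
      have hq : 0 < (a₂ - β') / 4 := by linarith
      set q : ℝ := (a₂ - β') / 4 with hqdef
      set α : ℝ := (a₁ + α') / 2 with hαdef
      set β : ℝ := β' + q with hβdef
      set γ : ℝ := β' + 2 * q with hγdef
      set δ : ℝ := β' + 3 * q with hδdef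
      have hαα' : α < α' := by simp only [hαdef]; linarith
      have haα : a₁ ≤ α := by simp only [hαdef]; linarith
      have hαβ : α < β := by simp only [hαdef, hβdef]; linarith
      have hβγ : β < γ := by simp only [hβdef, hγdef]; linarith
      have hγδ : γ < δ := by simp only [hγdef, hδdef]; linarith
      have hδa₂ : δ ≤ a₂ := by simp only [hδdef]; linarith
      have hβ'β : β' < β := by simp only [hβdef]; linarith
      have h0α : (0:ℝ) ≤ α := le_trans ha₁ haα
      have hβ1 : β ≤ 1 := by simp only [hβdef]; linarith
      obtain ⟨ζ, hζc, hζ0', hζ1', hζ1, hζ0⟩ := zeta_exists α α' β' β hαα' hα'β' hβ'β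
      set I : ℝ := ∫ x in Set.Icc (0:ℝ) 1, ζ x ∂μ with hIdef
      have hμle : (μ (Set.Icc α' β')).toReal ≤ I :=
        measure_icc_le μ hμsupp ζ α α' β' β hζc hζ0' hζ1 hζ0
      have hkey : ∀ η : ℝ, 0 < η → η ≤ q → I ≤ (β - α) * (2 * M * η) := by
        intro η hη hηq
        obtain ⟨x₀, hx₀mem, hx₀min⟩ :=
          (isCompact_Icc : IsCompact (Set.Icc α β)).exists_isMinOn
            (Set.nonempty_Icc.2 hαβ.le)
            (((hmc.comp (continuous_id.add continuous_const)).sub hmc)).continuousOn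
        set d₂ : ℝ := m (x₀ + η) - m x₀ with hd₂def
        have hx₀a : x₀ ∈ Set.Icc a₁ a₂ := ⟨le_trans haα hx₀mem.1, by
          have := hx₀mem.2; simp only [hβdef] at this ⊢; linarith⟩
        have hx₀ηa : x₀ + η ∈ Set.Icc a₁ a₂ := ⟨by linarith [hx₀a.1, hη], by
          have := hx₀mem.2; simp only [hβdef] at this; linarith⟩
        have hd₂pos : 0 < d₂ := sub_pos.2 (hmono hx₀a hx₀ηa (by linarith))
        have hd₂min : ∀ x ∈ Set.Icc α β, d₂ ≤ m (x + η) - m x := fun x hx => hx₀min hx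
        have hβa : β ∈ Set.Icc a₁ a₂ := ⟨by linarith, by linarith⟩
        have hγa : γ ∈ Set.Icc a₁ a₂ := ⟨by linarith, by linarith⟩
        have hd₁pos : 0 < m γ - m β := sub_pos.2 (hmono hβa hγa hβγ)
        have hbound : ∀ j : ℕ, (∫ x in (0:ℝ)..1, (w (sj j) x) ^ 2 * ζ x)
            ≤ (β - α) * (Real.exp (-(2 * sj j * (m γ - m β))) / (δ - γ)
              + 2 * M * (η + Real.exp (-(2 * sj j * d₂)))) := by
          intro j
          obtain ⟨hsm, hJb, hnorm⟩ := hwfacts j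
          exact weighted_integral_le (w (sj j)) ζ α β _ hsm.continuous hζc hζ0' hζ1' hζ0
            h0α hαβ.le hβ1
            (interval_bound_mono (sj j) M hMnn (hsjpos j) (w (sj j)) m hsm hm hJb hnorm
              a₁ a₂ α β γ δ η d₂ ha₁ haα hαβ hβγ hγδ hδa₂ ha₂ hη
              (by simp only [hβdef, hγdef]; linarith) hmono.monotoneOn hd₂min)
        have hlim : Tendsto (fun j => (β - α) * (Real.exp (-(2 * sj j * (m γ - m β))) / (δ - γ)
              + 2 * M * (η + Real.exp (-(2 * sj j * d₂))))) atTop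
            (nhds ((β - α) * ((0:ℝ) / (δ - γ) + 2 * M * (η + 0)))) := by
          apply Tendsto.const_mul
          exact ((hexp _ hd₁pos).div_const _).add
            ((tendsto_const_nhds.add (hexp _ hd₂pos)).const_mul _)
        have hle := le_of_tendsto_of_tendsto' (hweak ζ hζc) hlim hbound
        calc I ≤ (β - α) * ((0:ℝ) / (δ - γ) + 2 * M * (η + 0)) := hle
          _ = (β - α) * (2 * M * η) := by ring
      have hInn : I ≤ 0 := by
        by_contra hI
        push_neg at hI
        set C : ℝ := (β - α) * (2 * M) with hCdef
        have hCnn : 0 ≤ C := mul_nonneg (by linarith) (by linarith)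
        have hηpos : 0 < min q (I / (2 * (C + 1))) :=
          lt_min hq (div_pos hI (by linarith))
        have h := hkey _ hηpos (min_le_left _ _)
        have h2 : (β - α) * (2 * M * min q (I / (2 * (C + 1))))
            = C * min q (I / (2 * (C + 1))) := by simp only [hCdef]; ring
        have h3 : C * min q (I / (2 * (C + 1))) ≤ C * (I / (2 * (C + 1))) :=
          mul_le_mul_of_nonneg_left (min_le_right _ _) hCnn
        have h4 : C * (I / (2 * (C + 1))) ≤ I / 2 := by
          have hre : C * (I / (2 * (C + 1))) = (C * I) / (2 * (C + 1)) := by ring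
          rw [hre, div_le_div_iff₀ (by linarith) (by norm_num : (0:ℝ) < 2)]
          nlinarith [hI.le, hCnn]
        linarith
      linarith
    · -- strictly decreasing case
      have hq : 0 < (α' - a₁) / 4 := by linarith
      set q : ℝ := (α' - a₁) / 4 with hqdef
      set γ : ℝ := a₁ + q with hγdef
      set δ : ℝ := a₁ + 2 * q with hδdef
      set α : ℝ := a₁ + 3 * q with hαdef
      set β : ℝ := (β' + a₂) / 2 with hβdef
      have hαα' : α < α' := by simp only [hαdef]; linarith
      have haγ : a₁ ≤ γ := by simp only [hγdef]; linarith
      have hγδ : γ < δ := by simp only [hγdef, hδdef]; linarith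
      have hδα : δ < α := by simp only [hδdef, hαdef]; linarith
      have hαβ : α < β := by simp only [hαdef, hβdef]; linarith
      have hβa₂ : β ≤ a₂ := by simp only [hβdef]; linarith
      have hβ'β : β' < β := by simp only [hβdef]; linarith
      have h0α : (0:ℝ) ≤ α := by simp only [hαdef]; linarith
      have hβ1 : β ≤ 1 := le_trans hβa₂ ha₂
      obtain ⟨ζ, hζc, hζ0', hζ1', hζ1, hζ0⟩ := zeta_exists α α' β' β hαα' hα'β' hβ'β
      set I : ℝ := ∫ x in Set.Icc (0:ℝ) 1, ζ x ∂μ with hIdef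
      have hμle : (μ (Set.Icc α' β')).toReal ≤ I :=
        measure_icc_le μ hμsupp ζ α α' β' β hζc hζ0' hζ1 hζ0
      have hkey : ∀ η : ℝ, 0 < η → η ≤ q → I ≤ (β - α) * (2 * M * η) := by
        intro η hη hηq
        obtain ⟨x₀, hx₀mem, hx₀min⟩ :=
          (isCompact_Icc : IsCompact (Set.Icc α β)).exists_isMinOn
            (Set.nonempty_Icc.2 hαβ.le)
            (((hmc.comp (continuous_id.sub continuous_const)).sub hmc)).continuousOn
        set d₂ : ℝ := m (x₀ - η) - m x₀ with hd₂def
        have hx₀a : x₀ ∈ Set.Icc a₁ a₂ := ⟨by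
            have := hx₀mem.1; simp only [hαdef] at this; linarith,
          le_trans hx₀mem.2 hβa₂⟩
        have hx₀ηa : x₀ - η ∈ Set.Icc a₁ a₂ := ⟨by
            have := hx₀mem.1; simp only [hαdef] at this; linarith,
          by linarith [hx₀a.2, hη]⟩
        have hd₂pos : 0 < d₂ := sub_pos.2 (hanti hx₀ηa hx₀a (by linarith))
        have hd₂min : ∀ x ∈ Set.Icc α β, d₂ ≤ m (x - η) - m x := fun x hx => hx₀min hx
        have hαa : α ∈ Set.Icc a₁ a₂ := ⟨by linarith [haγ, hγδ, hδα], by linarith [hαβ, hβa₂]⟩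
        have hδa : δ ∈ Set.Icc a₁ a₂ := ⟨by linarith [haγ, hγδ], by linarith [hδα, hαa.2]⟩
        have hd₁pos : 0 < m δ - m α := sub_pos.2 (hanti hδa hαa hδα)
        have hbound : ∀ j : ℕ, (∫ x in (0:ℝ)..1, (w (sj j) x) ^ 2 * ζ x)
            ≤ (β - α) * (Real.exp (-(2 * sj j * (m δ - m α))) / (δ - γ)
              + 2 * M * (η + Real.exp (-(2 * sj j * d₂)))) := by
          intro j
          obtain ⟨hsm, hJb, hnorm⟩ := hwfacts j
          exact weighted_integral_le (w (sj j)) ζ α β _ hsm.continuous hζc hζ0' hζ1' hζ0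
            h0α hαβ.le hβ1
            (interval_bound_anti (sj j) M hMnn (hsjpos j) (w (sj j)) m hsm hm hJb hnorm
              a₁ a₂ α β γ δ η d₂ ha₁ haγ hγδ hδα hαβ hβa₂ ha₂ hη
              (by simp only [hαdef, hδdef]; linarith) hanti.antitoneOn hd₂min)
        have hlim : Tendsto (fun j => (β - α) * (Real.exp (-(2 * sj j * (m δ - m α))) / (δ - γ)
              + 2 * M * (η + Real.exp (-(2 * sj j * d₂))))) atTop
            (nhds ((β - α) * ((0:ℝ) / (δ - γ) + 2 * M * (η + 0)))) := by
          apply Tendsto.const_mul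
          exact ((hexp _ hd₁pos).div_const _).add
            ((tendsto_const_nhds.add (hexp _ hd₂pos)).const_mul _)
        have hle := le_of_tendsto_of_tendsto' (hweak ζ hζc) hlim hbound
        calc I ≤ (β - α) * ((0:ℝ) / (δ - γ) + 2 * M * (η + 0)) := hle
          _ = (β - α) * (2 * M * η) := by ring
      have hInn : I ≤ 0 := by
        by_contra hI
        push_neg at hI
        set C : ℝ := (β - α) * (2 * M) with hCdef
        have hCnn : 0 ≤ C := mul_nonneg (by linarith) (by linarith)
        have hηpos : 0 < min q (I / (2 * (C + 1))) :=
          lt_min hq (div_pos hI (by linarith))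
        have h := hkey _ hηpos (min_le_left _ _)
        have h2 : (β - α) * (2 * M * min q (I / (2 * (C + 1))))
            = C * min q (I / (2 * (C + 1))) := by simp only [hCdef]; ring
        have h3 : C * min q (I / (2 * (C + 1))) ≤ C * (I / (2 * (C + 1))) :=
          mul_le_mul_of_nonneg_left (min_le_right _ _) hCnn
        have h4 : C * (I / (2 * (C + 1))) ≤ I / 2 := by
          have hre : C * (I / (2 * (C + 1))) = (C * I) / (2 * (C + 1)) := by ring
          rw [hre, div_le_div_iff₀ (by linarith) (by norm_num : (0:ℝ) < 2)]
          nlinarith [hI.le, hCnn]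
        linarith
      linarith
  -- covering argument
  have hcover : Set.Ioo a₁ a₂ ⊆ ⋃ n : ℕ,
      Set.Icc (a₁ + (a₂ - a₁) / (n + 1)) (a₂ - (a₂ - a₁) / (n + 1)) := by
    intro x hx
    have hε : 0 < min (x - a₁) (a₂ - x) := lt_min (by linarith [hx.1]) (by linarith [hx.2])
    obtain ⟨n, hn⟩ := exists_nat_gt ((a₂ - a₁) / min (x - a₁) (a₂ - x))
    refine Set.mem_iUnion.2 ⟨n, ?_, ?_⟩
    · have h1 : (a₂ - a₁) / (n + 1) ≤ min (x - a₁) (a₂ - x) := by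
        rw [div_le_iff₀ (by positivity)]
        rw [div_lt_iff₀ hε] at hn
        nlinarith [hε, hn]
      have := le_trans h1 (min_le_left _ _)
      linarith
    · have h1 : (a₂ - a₁) / (n + 1) ≤ min (x - a₁) (a₂ - x) := by
        rw [div_le_iff₀ (by positivity)]
        rw [div_lt_iff₀ hε] at hn
        nlinarith [hε, hn]
      have := le_trans h1 (min_le_right _ _)
      linarith
  have hnull : μ (⋃ n : ℕ,
      Set.Icc (a₁ + (a₂ - a₁) / (n + 1)) (a₂ - (a₂ - a₁) / (n + 1))) = 0 := by
    apply measure_iUnion_null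
    intro n
    apply hIcc
    · have : (0:ℝ) < (a₂ - a₁) / (n + 1) := div_pos (by linarith) (by positivity)
      linarith
    · have : (0:ℝ) < (a₂ - a₁) / (n + 1) := div_pos (by linarith) (by positivity)
      linarith
  exact measure_mono_null hcover hnull
end
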